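/- arXiv:2509.17756 — 6 statements merged into one kernel-verified Lean document; each statement's English description precedes it below -/
import Mathlib

section
/- Let G be a connected graph on n vertices and let S be a subset of V(G) such that every pair of distinct vertices in S has distance at least 2ℓ-1 in G, where ℓ ≥ 1. Then |S| ≤ max{⌊n/ℓ⌋, 1}. -/
open Finset

private lemma walk_prefix {V : Type*} {G : SimpleGraph V} :
    ∀ {u v : V} (p : G.Walk u v) (i : ℕ), i ≤ p.length →
      ∃ q : G.Walk u (p.getVert i), q.length = i := by
  intro u v p
  induction p with
  | nil =>
    intro i hi
    have : i = 0 := by simpa using hi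
    subst this
    exact ⟨SimpleGraph.Walk.nil, rfl⟩
  | cons h q ih =>
    intro i hi
    cases i with
    | zero => exact ⟨SimpleGraph.Walk.nil, rfl⟩
    | succ j =>
      obtain ⟨w, hw⟩ := ih j (by simpa using hi)
      exact ⟨SimpleGraph.Walk.cons h w, by simp [hw]⟩

private lemma walk_suffix {V : Type*} {G : SimpleGraph V} :
    ∀ {u v : V} (p : G.Walk u v) (i : ℕ), i ≤ p.length →
      ∃ q : G.Walk (p.getVert i) v, q.length = p.length - i := by
  intro u v p
  induction p with
  | nil =>
    intro i hi
    have : i = 0 := by simpa using hi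
    subst this
    exact ⟨SimpleGraph.Walk.nil, rfl⟩
  | cons h q ih =>
    intro i hi
    cases i with
    | zero => exact ⟨SimpleGraph.Walk.cons h q, by rfl⟩
    | succ j =>
      obtain ⟨w, hw⟩ := ih j (by simpa using hi)
      exact ⟨w, by simpa using hw⟩

private lemma dist_getVert {V : Type*} {G : SimpleGraph V} (hG : G.Connected) {u v : V}
    (p : G.Walk u v) (hp : p.length = G.dist u v) (i : ℕ) (hi : i ≤ p.length) :
    G.dist u (p.getVert i) = i := by
  obtain ⟨q, hq⟩ := walk_prefix p i hi
  obtain ⟨r, hr⟩ := walk_suffix p i hi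
  have h1 := SimpleGraph.dist_le q
  have h2 := SimpleGraph.dist_le r
  have h3 : G.dist u v ≤ G.dist u (p.getVert i) + G.dist (p.getVert i) v :=
    hG.dist_triangle
  omega

/-- Jiang's Lemma 1: In a connected graph `G` on `n` vertices, any set `S`
of vertices with pairwise distance at least `2ℓ - 1` satisfies `|S| ≤ max (⌊n/ℓ⌋) 1`. -/
theorem stmt_0 {V : Type*} [Fintype V] (G : SimpleGraph V) (hG : G.Connected)
    (ℓ : ℕ) (hℓ : 1 ≤ ℓ) (S : Finset V)
    (hS : ∀ u ∈ S, ∀ v ∈ S, u ≠ v → 2 * ℓ - 1 ≤ G.dist u v) :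
    S.card ≤ max (Fintype.card V / ℓ) 1 := by
  rcases le_or_gt S.card 1 with h1 | h1
  · exact h1.trans (le_max_right _ _)
  -- every s ∈ S has a vertex at each distance i < ℓ
  have key : ∀ p : V × ℕ, ∃ x : V, p ∈ S ×ˢ range ℓ → G.dist p.1 x = p.2 := by
    rintro ⟨s, i⟩
    by_cases hp : (s, i) ∈ S ×ˢ range ℓ
    · rw [mem_product, mem_range] at hp
      obtain ⟨t, ht, hts⟩ := Finset.exists_mem_ne h1 s
      obtain ⟨w, hw⟩ := hG.exists_walk_length_eq_dist s t
      have hd : 2 * ℓ - 1 ≤ G.dist s t := hS s hp.1 t ht (Ne.symm hts)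
      have hi : i ≤ w.length := by omega
      exact ⟨w.getVert i, fun _ => dist_getVert hG w hw i hi⟩
    · exact ⟨s, fun h => absurd h hp⟩
  choose f hf using key
  have hcard : S.card * ℓ ≤ Fintype.card V := by
    calc S.card * ℓ = (S ×ˢ range ℓ).card := by simp [Finset.card_product]
    _ ≤ (Finset.univ : Finset V).card := by
        apply Finset.card_le_card_of_injOn f (fun _ _ => mem_univ _)
        rintro ⟨s, i⟩ hp ⟨t, j⟩ hq heq
        have hp' := hp; have hq' := hq
        simp only [coe_product, Set.mem_prod, mem_coe, coe_range, Set.mem_Iio] at hp' hq'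
        have e1 : G.dist s (f (s, i)) = i := hf (s, i) (by simpa [mem_product, mem_range] using hp')
        have e2 : G.dist t (f (t, j)) = j := hf (t, j) (by simpa [mem_product, mem_range] using hq')
        by_cases hst : s = t
        · subst hst
          have : i = j := by rw [← e1, ← e2, heq]
          simp [this]
        · exfalso
          have hd : 2 * ℓ - 1 ≤ G.dist s t := hS s hp'.1 t hq'.1 hst
          have h3 : G.dist s t ≤ G.dist s (f (s, i)) + G.dist (f (s, i)) t :=
            hG.dist_triangle
          rw [heq] at h3 e1
          rw [SimpleGraph.dist_comm] at e2
          omega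
    _ = Fintype.card V := Finset.card_univ
  exact le_max_of_le_left ((Nat.le_div_iff_mul_le hℓ).mpr hcard)
end

section
/- Let T be a finite tree whose vertex of degree-2 set in its skeleton is nonempty, such that T has at most ℓ-1 penultimate vertices. Let m be the minimum over all degree-2 vertices x of the skeleton S(T) of dep(x), where dep(x) is the minimum over components A of S(T)-x of the maximum distance in S(T) from x to a vertex of A. Then m ≤ (ℓ-1)/2. -/
open Finset

/-- The skeleton of a tree `G`: the subgraph induced on the non-leaf vertices
(vertices of degree at least 2). -/
abbrev skeletonSet {V : Type*} [Fintype V] [DecidableEq V] (G : SimpleGraph V)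
    [DecidableRel G.Adj] : Set V := {v : V | 2 ≤ G.degree v}

abbrev skeleton {V : Type*} [Fintype V] [DecidableEq V] (G : SimpleGraph V)
    [DecidableRel G.Adj] : SimpleGraph (skeletonSet G) := G.induce (skeletonSet G)

namespace StmtAux

lemma induce_reachable_of_walk {V : Type*} {G : SimpleGraph V} {s : Set V} :
    ∀ {a b : V} (p : G.Walk a b), (∀ w ∈ p.support, w ∈ s) → (ha : a ∈ s) → (hb : b ∈ s) →
    (G.induce s).Reachable ⟨a, ha⟩ ⟨b, hb⟩ := by
  intro a b p
  induction p with
  | nil => intro _ ha hb; rfl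
  | @cons a c b h q ih =>
    intro hp ha hb
    have hc : c ∈ s := hp c (by simp [SimpleGraph.Walk.support_cons])
    have hadj : (G.induce s).Adj ⟨a, ha⟩ ⟨c, hc⟩ := h
    exact hadj.reachable.trans
      (ih (fun w hw => hp w (by simp [SimpleGraph.Walk.support_cons, hw])) hc hb)

lemma walk_of_induce_reachable {V : Type*} {G : SimpleGraph V} {s : Set V} {a b : ↥s}
    (h : (G.induce s).Reachable a b) :
    ∃ p : G.Walk a.1 b.1, ∀ w ∈ p.support, w ∈ s := by
  obtain ⟨q⟩ := h
  let f : G.induce s →g G := ⟨Subtype.val, fun {x y} h => h⟩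
  refine ⟨q.map f, fun w hw => ?_⟩
  rw [SimpleGraph.Walk.support_map] at hw
  obtain ⟨z, _, rfl⟩ := List.mem_map.mp hw
  exact z.2

lemma exists_walk_getVert_left {V : Type*} {G : SimpleGraph V} :
    ∀ {a b : V} (p : G.Walk a b) (i : ℕ), ∃ r : G.Walk a (p.getVert i), r.length ≤ i := by
  intro a b p
  induction p with
  | nil => intro i; exact ⟨SimpleGraph.Walk.nil, by simp⟩
  | @cons a c b h q ih =>
    intro i
    cases i with
    | zero => exact ⟨SimpleGraph.Walk.nil, le_of_eq rfl⟩
    | succ i =>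
      obtain ⟨r, hr⟩ := ih i
      exact ⟨SimpleGraph.Walk.cons h r, by simpa using Nat.succ_le_succ hr⟩

lemma exists_walk_getVert_right {V : Type*} {G : SimpleGraph V} :
    ∀ {a b : V} (p : G.Walk a b) (i : ℕ),
      ∃ r : G.Walk (p.getVert i) b, r.length ≤ p.length - i := by
  intro a b p
  induction p with
  | nil => intro i; exact ⟨SimpleGraph.Walk.nil, by simp⟩
  | @cons a c b h q ih =>
    intro i
    cases i with
    | zero => exact ⟨SimpleGraph.Walk.cons h q, le_of_eq rfl⟩
    | succ i =>
      obtain ⟨r, hr⟩ := ih i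
      refine ⟨r, ?_⟩
      simpa using hr

lemma dist_getVert_eq {V : Type*} {G : SimpleGraph V} {a b : V} (p : G.Walk a b)
    (hp : p.length = G.dist a b) {i : ℕ} (hi : i ≤ p.length) :
    G.dist a (p.getVert i) = i ∧ G.dist (p.getVert i) b = p.length - i := by
  obtain ⟨r1, hr1⟩ := exists_walk_getVert_left p i
  obtain ⟨r2, hr2⟩ := exists_walk_getVert_right p i
  have d1 := SimpleGraph.dist_le r1
  have d2 := SimpleGraph.dist_le r2
  obtain ⟨w1, hw1⟩ := (r1.reachable).exists_walk_length_eq_dist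
  obtain ⟨w2, hw2⟩ := (r2.reachable).exists_walk_length_eq_dist
  have h3 := SimpleGraph.dist_le (w1.append w2)
  rw [SimpleGraph.Walk.length_append, hw1, hw2, ← hp] at h3
  omega

lemma acyclic_path_hits {V : Type*} [DecidableEq V] {G : SimpleGraph V} (hG : G.IsAcyclic)
    {x u : V} (p : G.Walk x u) (hp : p.IsPath) {w : V} (hw : w ∈ p.support)
    (q : G.Walk x u) (hq : w ∉ q.support) : False := by
  have h := hG.path_unique ⟨p, hp⟩ q.toPath
  have hpq : p = q.bypass := congrArg Subtype.val h
  exact hq (q.support_bypass_subset (hpq ▸ hw))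

lemma two_le_degree_of_two_adj {V : Type*} {G : SimpleGraph V} [Fintype V] [DecidableEq V]
    [DecidableRel G.Adj]
    {w a b : V} (hab : a ≠ b) (ha : G.Adj w a) (hb : G.Adj w b) : 2 ≤ G.degree w := by
  have hsub : ({a, b} : Finset V) ⊆ G.neighborFinset w := by
    intro z hz
    rcases Finset.mem_insert.1 hz with rfl | hz
    · exact (SimpleGraph.mem_neighborFinset _ _ _).2 ha
    · rw [Finset.mem_singleton] at hz; subst hz
      exact (SimpleGraph.mem_neighborFinset _ _ _).2 hb
  calc 2 = ({a, b} : Finset V).card := (Finset.card_pair hab).symm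
    _ ≤ (G.neighborFinset w).card := Finset.card_le_card hsub

open Classical in
noncomputable def eccAux {W : Type*} [Fintype W] (S : SimpleGraph W) (x : W)
    (c : (S.induce {y | y ≠ x}).ConnectedComponent) : ℕ :=
  (Finset.univ.filter fun u : {y : W // y ≠ x} =>
    (S.induce {y | y ≠ x}).connectedComponentMk u = c).sup fun u => S.dist x u.1

open Classical in
lemma eccAux_le {W : Type*} [Fintype W] (S : SimpleGraph W) (x : W)
    (c : (S.induce {y | y ≠ x}).ConnectedComponent) (u : {y : W // y ≠ x})
    (hu : (S.induce {y | y ≠ x}).connectedComponentMk u = c) :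
    S.dist x u.1 ≤ eccAux S x c :=
  Finset.le_sup (f := fun u : {y : W // y ≠ x} => S.dist x u.1)
    (Finset.mem_filter.2 ⟨Finset.mem_univ _, hu⟩)

open Classical in
lemma eccAux_attained {W : Type*} [Fintype W] (S : SimpleGraph W) (x : W)
    (c : (S.induce {y | y ≠ x}).ConnectedComponent) :
    ∃ u : {y : W // y ≠ x}, (S.induce {y | y ≠ x}).connectedComponentMk u = c ∧
      S.dist x u.1 = eccAux S x c := by
  obtain ⟨v, hv⟩ := c.exists_rep
  have hne : (Finset.univ.filter fun u : {y : W // y ≠ x} =>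
      (S.induce {y | y ≠ x}).connectedComponentMk u = c).Nonempty :=
    ⟨v, Finset.mem_filter.2 ⟨Finset.mem_univ _, hv⟩⟩
  obtain ⟨u, hu, h⟩ := Finset.exists_mem_eq_sup _ hne fun u : {y : W // y ≠ x} => S.dist x u.1
  exact ⟨u, (Finset.mem_filter.1 hu).2, h.symm⟩

open Classical in
lemma eccAux_sup_le {W : Type*} [Fintype W] (S : SimpleGraph W) (x : W)
    (c : (S.induce {y | y ≠ x}).ConnectedComponent) (n : ℕ)
    (h : ∀ u : {y : W // y ≠ x}, (S.induce {y | y ≠ x}).connectedComponentMk u = c →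
      S.dist x u.1 ≤ n) :
    eccAux S x c ≤ n :=
  Finset.sup_le fun u hu => h u (Finset.mem_filter.1 hu).2

theorem tree_main {W : Type*} [Fintype W] [DecidableEq W] (S : SimpleGraph W)
    [DecidableRel S.Adj] (hS : S.IsTree) (x₀ : W) (hx₀ : S.degree x₀ = 2) :
    ∃ x : W, S.degree x = 2 ∧ ∃ c : (S.induce {y : W | y ≠ x}).ConnectedComponent,
      ∀ u : {y : W // y ≠ x}, (S.induce {y : W | y ≠ x}).connectedComponentMk u = c →
        2 * S.dist x u.1 ≤ {y : W | S.degree y = 1}.ncard := by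
  classical
  have hconn := hS.isConnected
  have hacyc := hS.IsAcyclic
  set N : Set ℕ := {n | ∃ x : W, S.degree x = 2 ∧
    ∃ c : (S.induce {y | y ≠ x}).ConnectedComponent, eccAux S x c = n} with hN
  have hNne : N.Nonempty := by
    obtain ⟨y, hy⟩ : ∃ y, S.Adj x₀ y := by
      rw [← SimpleGraph.degree_pos_iff_exists_adj]; omega
    exact ⟨_, x₀, hx₀, (S.induce {y | y ≠ x₀}).connectedComponentMk ⟨y, hy.ne'⟩, rfl⟩
  set m := sInf N with hm
  obtain ⟨x, hx2, c, hEc⟩ := Nat.sInf_mem hNne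
  rw [← hm] at hEc
  have hmin : ∀ (x' : W), S.degree x' = 2 →
      ∀ c' : (S.induce {y | y ≠ x'}).ConnectedComponent, m ≤ eccAux S x' c' :=
    fun x' h2 c' => Nat.sInf_le ⟨x', h2, c', rfl⟩
  obtain ⟨u₁, hu₁c, hu₁d⟩ := eccAux_attained S x c
  have hm1 : 1 ≤ m := by
    rw [← hEc, ← hu₁d]
    exact hconn.pos_dist_of_ne (Ne.symm u₁.2)
  -- Key rigidity lemma
  have key : ∀ (x' : W), S.degree x' = 2 → ∀ (u : W) (hux : u ≠ x')
      (p : S.Walk x' u) (hlen : p.length = S.dist x' u) (Eb : ℕ),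
      (∀ v : {y : W // y ≠ x'},
        (S.induce {y | y ≠ x'}).connectedComponentMk v =
        (S.induce {y | y ≠ x'}).connectedComponentMk ⟨u, hux⟩ → S.dist x' v.1 ≤ Eb) →
      ∀ i : ℕ, Eb - m < i → i < p.length → 3 ≤ S.degree (p.getVert i) := by
    intro x' hx'2 u hux p hlen Eb hEb i hi1 hi2
    have hp : p.IsPath := p.isPath_of_length_eq_dist hlen
    have hi0 : 0 < i := by omega
    obtain ⟨j, rfl⟩ : ∃ j, i = j + 1 := ⟨i - 1, by omega⟩
    have hd := dist_getVert_eq p hlen (le_of_lt hi2)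
    set w := p.getVert (j + 1) with hwdef
    have hdxw : S.dist x' w = j + 1 := hd.1
    have hdwu : S.dist w u = p.length - (j + 1) := hd.2
    have hwx : w ≠ x' := by
      intro h; rw [h, SimpleGraph.dist_self] at hdxw; omega
    have hwu : w ≠ u := by
      intro h; rw [h, SimpleGraph.dist_self] at hdwu; omega
    have adj1 : S.Adj (p.getVert j) w := p.adj_getVert_succ (by omega)
    have adj2 : S.Adj w (p.getVert (j + 2)) := p.adj_getVert_succ (i := j + 1) (by omega)
    have dj := (dist_getVert_eq p hlen (i := j) (by omega)).1
    have dj2 := (dist_getVert_eq p hlen (i := j + 2) (by omega)).1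
    have hne12 : p.getVert j ≠ p.getVert (j + 2) := by
      intro h; rw [h] at dj; omega
    have hdeg2w : 2 ≤ S.degree w := two_le_degree_of_two_adj hne12 adj1.symm adj2
    by_contra hdeg3
    have hw2 : S.degree w = 2 := by omega
    -- x' and u are separated by w
    have hsep : ¬ (S.induce {y | y ≠ w}).Reachable ⟨x', Ne.symm hwx⟩ ⟨u, Ne.symm hwu⟩ := by
      intro hr
      obtain ⟨q, hq⟩ := walk_of_induce_reachable hr
      exact acyclic_path_hits hacyc p hp
        (SimpleGraph.Walk.mem_support_iff_exists_getVert.2 ⟨j + 1, rfl, le_of_lt hi2⟩) q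
        (fun hwq => (hq w hwq) rfl)
    have hbound : eccAux S w
        ((S.induce {y | y ≠ w}).connectedComponentMk ⟨u, Ne.symm hwu⟩) ≤ Eb - (j + 1) := by
      apply eccAux_sup_le
      intro v hv
      have hvr : (S.induce {y | y ≠ w}).Reachable v ⟨u, Ne.symm hwu⟩ :=
        (SimpleGraph.ConnectedComponent.eq).1 hv
      obtain ⟨r, hr⟩ := walk_of_induce_reachable hvr
      have hxr : x' ∉ r.support := by
        intro hxs
        exact hsep (induce_reachable_of_walk (r.dropUntil x' hxs)
          (fun z hz => hr z (SimpleGraph.Walk.support_dropUntil_subset _ _ hz))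
          (hr x' hxs) (Ne.symm hwu))
      have hvx : v.1 ≠ x' := fun h => hxr (h ▸ r.start_mem_support)
      have hcomp : (S.induce {y | y ≠ x'}).connectedComponentMk ⟨v.1, hvx⟩ =
          (S.induce {y | y ≠ x'}).connectedComponentMk ⟨u, hux⟩ :=
        SimpleGraph.ConnectedComponent.sound
          (induce_reachable_of_walk r (fun z hz => show z ≠ x' from fun hzx => hxr (hzx ▸ hz)) hvx hux)
      have hdxv : S.dist x' v.1 ≤ Eb := hEb ⟨v.1, hvx⟩ hcomp
      obtain ⟨r2, hr2len⟩ := hconn.exists_walk_length_eq_dist x' v.1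
      have hwr2 : w ∈ r2.support := by
        by_contra hwn
        exact hsep ((induce_reachable_of_walk r2 (fun z hz => show z ≠ w from fun hzw => hwn (hzw ▸ hz))
          (Ne.symm hwx) v.2).trans hvr)
      have h1 := SimpleGraph.dist_le (r2.dropUntil w hwr2)
      have h2 : (r2.takeUntil w hwr2).length + (r2.dropUntil w hwr2).length = r2.length := by
        have := congrArg SimpleGraph.Walk.length (r2.take_spec hwr2)
        rwa [SimpleGraph.Walk.length_append] at this
      have h3 := SimpleGraph.dist_le (r2.takeUntil w hwr2)
      omega
    have := hmin w hw2 ((S.induce {y | y ≠ w}).connectedComponentMk ⟨u, Ne.symm hwu⟩)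
    omega
  -- component membership of vertices on a path
  have compmem : ∀ (x' u : W) (hux : u ≠ x') (p : S.Walk x' u), p.IsPath →
      ∀ (w : W) (hw : w ∈ p.support) (hwx : w ≠ x'),
      (S.induce {y | y ≠ x'}).connectedComponentMk ⟨w, hwx⟩ =
      (S.induce {y | y ≠ x'}).connectedComponentMk ⟨u, hux⟩ := by
    intro x' u hux p hp w hw hwx
    have hnodup2 : ((p.takeUntil w hw).support ++ (p.dropUntil w hw).support.tail).Nodup := by
      rw [← SimpleGraph.Walk.support_append, p.take_spec hw]; exact hp.support_nodup
    have hdisj := List.disjoint_of_nodup_append hnodup2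
    have hxtake : x' ∈ (p.takeUntil w hw).support := SimpleGraph.Walk.start_mem_support _
    have hxdrop : ∀ z ∈ (p.dropUntil w hw).support, z ≠ x' := by
      intro z hz hzx
      subst hzx
      rw [SimpleGraph.Walk.support_eq_cons] at hz
      rcases List.mem_cons.1 hz with h | h
      · exact hwx h.symm
      · exact (hdisj hxtake) h
    exact SimpleGraph.ConnectedComponent.sound
      (induce_reachable_of_walk (p.dropUntil w hw) (fun z hz => hxdrop z hz) hwx hux)
  -- a component different from c exists
  have hcard2 : (S.neighborFinset x).card = 2 := hx2
  obtain ⟨y₁, y₂, hyne, hy12⟩ := Finset.card_eq_two.1 hcard2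
  have hadj1 : S.Adj x y₁ := by
    rw [← SimpleGraph.mem_neighborFinset, hy12]; simp
  have hadj2 : S.Adj x y₂ := by
    rw [← SimpleGraph.mem_neighborFinset, hy12]; simp
  have hcompne : (S.induce {y | y ≠ x}).connectedComponentMk ⟨y₁, hadj1.ne'⟩ ≠
      (S.induce {y | y ≠ x}).connectedComponentMk ⟨y₂, hadj2.ne'⟩ := by
    intro h
    obtain ⟨r, hr⟩ := walk_of_induce_reachable ((SimpleGraph.ConnectedComponent.eq).1 h)
    have hpath : (SimpleGraph.Walk.cons hadj1.symm
        (SimpleGraph.Walk.cons hadj2 SimpleGraph.Walk.nil)).IsPath := by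
      simp [SimpleGraph.Walk.isPath_def, hyne, hadj1.ne', Ne.symm hadj2.ne']
    exact acyclic_path_hits hacyc _ hpath (w := x) (by simp) r (fun hx' => hr x hx' rfl)
  have hc'ex : ∃ c' : (S.induce {y | y ≠ x}).ConnectedComponent, c' ≠ c := by
    by_cases h1 : (S.induce {y | y ≠ x}).connectedComponentMk ⟨y₁, hadj1.ne'⟩ = c
    · exact ⟨_, fun h => hcompne (h1.trans h.symm)⟩
    · exact ⟨_, h1⟩
  obtain ⟨c', hc'ne⟩ := hc'ex
  -- side 1 data
  have hu₁x : u₁.1 ≠ x := u₁.2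
  obtain ⟨p₁, hp₁len⟩ := hconn.exists_walk_length_eq_dist x u₁.1
  have hp₁l : p₁.length = m := by rw [hp₁len, hu₁d, hEc]
  have hEb1 : ∀ v : {y : W // y ≠ x},
      (S.induce {y | y ≠ x}).connectedComponentMk v =
      (S.induce {y | y ≠ x}).connectedComponentMk ⟨u₁.1, hu₁x⟩ → S.dist x v.1 ≤ m := by
    intro v hv
    have hvc : (S.induce {y | y ≠ x}).connectedComponentMk v = c := hv.trans hu₁c
    rw [← hEc]
    exact eccAux_le _ _ _ _ hvc
  have key1 := key x hx2 u₁.1 hu₁x p₁ hp₁len m hEb1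
  -- side 2 data
  obtain ⟨u₂, hu₂c, hu₂d⟩ := eccAux_attained S x c'
  set f := eccAux S x c' with hf
  have hmf : m ≤ f := hmin x hx2 c'
  obtain ⟨p₂, hp₂len⟩ := hconn.exists_walk_length_eq_dist x u₂.1
  have hp₂l : p₂.length = f := by rw [hp₂len, hu₂d]
  have hEb2 : ∀ v : {y : W // y ≠ x},
      (S.induce {y | y ≠ x}).connectedComponentMk v =
      (S.induce {y | y ≠ x}).connectedComponentMk ⟨u₂.1, u₂.2⟩ → S.dist x v.1 ≤ f := by
    intro v hv
    exact eccAux_le _ _ _ _ (hv.trans hu₂c)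
  have key2 := key x hx2 u₂.1 u₂.2 p₂ hp₂len f hEb2
  -- the two finsets of degree-3 vertices
  set F₁ := (Finset.range (m - 1)).image (fun j => p₁.getVert (j + 1)) with hF₁
  set F₂ := (Finset.range (m - 1)).image (fun j => p₂.getVert (f - m + 1 + j)) with hF₂
  have hcard1 : F₁.card = m - 1 := by
    rw [hF₁, Finset.card_image_of_injOn, Finset.card_range]
    intro a ha b hb hab
    rw [Finset.mem_coe, Finset.mem_range] at ha hb
    have da := (dist_getVert_eq p₁ hp₁len (i := a + 1) (by omega)).1
    have db := (dist_getVert_eq p₁ hp₁len (i := b + 1) (by omega)).1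
    have hab' : p₁.getVert (a + 1) = p₁.getVert (b + 1) := hab
    rw [hab'] at da
    omega
  have hcard2' : F₂.card = m - 1 := by
    rw [hF₂, Finset.card_image_of_injOn, Finset.card_range]
    intro a ha b hb hab
    rw [Finset.mem_coe, Finset.mem_range] at ha hb
    have da := (dist_getVert_eq p₂ hp₂len (i := f - m + 1 + a) (by omega)).1
    have db := (dist_getVert_eq p₂ hp₂len (i := f - m + 1 + b) (by omega)).1
    have hab' : p₂.getVert (f - m + 1 + a) = p₂.getVert (f - m + 1 + b) := hab
    rw [hab'] at da
    omega
  have hF₁deg : ∀ z ∈ F₁, 3 ≤ S.degree z := by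
    intro z hz
    obtain ⟨j, hj, rfl⟩ := Finset.mem_image.1 hz
    rw [Finset.mem_range] at hj
    exact key1 (j + 1) (by omega) (by omega)
  have hF₂deg : ∀ z ∈ F₂, 3 ≤ S.degree z := by
    intro z hz
    obtain ⟨j, hj, rfl⟩ := Finset.mem_image.1 hz
    rw [Finset.mem_range] at hj
    exact key2 (f - m + 1 + j) (by omega) (by omega)
  have hF₁c : ∀ z ∈ F₁, ∃ hz : z ≠ x,
      (S.induce {y | y ≠ x}).connectedComponentMk ⟨z, hz⟩ = c := by
    intro z hz
    obtain ⟨j, hj, rfl⟩ := Finset.mem_image.1 hz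
    rw [Finset.mem_range] at hj
    have dz := (dist_getVert_eq p₁ hp₁len (i := j + 1) (by omega)).1
    have hzx : p₁.getVert (j + 1) ≠ x := by
      intro h; rw [h, SimpleGraph.dist_self] at dz; omega
    refine ⟨hzx, ?_⟩
    have := compmem x u₁.1 hu₁x p₁ (p₁.isPath_of_length_eq_dist hp₁len) _
      (SimpleGraph.Walk.mem_support_iff_exists_getVert.2 ⟨j + 1, rfl, by omega⟩) hzx
    exact this.trans hu₁c
  have hF₂c : ∀ z ∈ F₂, ∃ hz : z ≠ x,
      (S.induce {y | y ≠ x}).connectedComponentMk ⟨z, hz⟩ = c' := by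
    intro z hz
    obtain ⟨j, hj, rfl⟩ := Finset.mem_image.1 hz
    rw [Finset.mem_range] at hj
    have dz := (dist_getVert_eq p₂ hp₂len (i := f - m + 1 + j) (by omega)).1
    have hzx : p₂.getVert (f - m + 1 + j) ≠ x := by
      intro h; rw [h, SimpleGraph.dist_self] at dz; omega
    refine ⟨hzx, ?_⟩
    have := compmem x u₂.1 u₂.2 p₂ (p₂.isPath_of_length_eq_dist hp₂len) _
      (SimpleGraph.Walk.mem_support_iff_exists_getVert.2 ⟨f - m + 1 + j, rfl, by omega⟩) hzx
    exact this.trans hu₂c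
  have hdisjF : Disjoint F₁ F₂ := by
    rw [Finset.disjoint_left]
    intro z h1 h2
    obtain ⟨hz1, hcc1⟩ := hF₁c z h1
    obtain ⟨hz2, hcc2⟩ := hF₂c z h2
    exact hc'ne (hcc2.symm.trans hcc1)
  have hcount : 2 * (m - 1) ≤ (Finset.univ.filter (fun v => 3 ≤ S.degree v)).card := by
    have hsub : F₁ ∪ F₂ ⊆ Finset.univ.filter (fun v => 3 ≤ S.degree v) := by
      intro z hz
      rcases Finset.mem_union.1 hz with h | h
      · exact Finset.mem_filter.2 ⟨Finset.mem_univ _, hF₁deg z h⟩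
      · exact Finset.mem_filter.2 ⟨Finset.mem_univ _, hF₂deg z h⟩
    calc 2 * (m - 1) = F₁.card + F₂.card := by omega
      _ = (F₁ ∪ F₂).card := (Finset.card_union_of_disjoint hdisjF).symm
      _ ≤ _ := Finset.card_le_card hsub
  -- leaf counting
  have hdeg1all : ∀ v : W, 1 ≤ S.degree v := by
    intro v
    rcases eq_or_ne v x with rfl | hvx
    · omega
    · obtain ⟨p, hplen⟩ := hconn.exists_walk_length_eq_dist v x
      have hpos : 0 < p.length := by
        rw [hplen]; exact hconn.pos_dist_of_ne hvx
      have hadj := p.adj_getVert_succ (i := 0) hpos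
      rw [SimpleGraph.Walk.getVert_zero] at hadj
      exact (SimpleGraph.degree_pos_iff_exists_adj S v).2 ⟨_, hadj⟩
  set A1 := Finset.univ.filter (fun v => S.degree v = 1) with hA1
  set A2 := Finset.univ.filter (fun v => S.degree v = 2) with hA2
  set A3 := Finset.univ.filter (fun v => 3 ≤ S.degree v) with hA3
  have hA12 : Disjoint A1 A2 := by
    rw [Finset.disjoint_left]
    intro a h1 h2
    rw [hA1, Finset.mem_filter] at h1
    rw [hA2, Finset.mem_filter] at h2
    omega
  have hA123 : Disjoint (A1 ∪ A2) A3 := by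
    rw [Finset.disjoint_left]
    intro a h1 h2
    rw [hA3, Finset.mem_filter] at h2
    rcases Finset.mem_union.1 h1 with h | h
    · rw [hA1, Finset.mem_filter] at h; omega
    · rw [hA2, Finset.mem_filter] at h; omega
  have hcover : A1 ∪ A2 ∪ A3 = Finset.univ := by
    ext v
    simp only [hA1, hA2, hA3, Finset.mem_union, Finset.mem_filter, Finset.mem_univ, true_and,
      iff_true]
    have := hdeg1all v
    omega
  have hedges : S.edgeFinset.card + 1 = Fintype.card W := hS.card_edgeFinset
  have hsum : ∑ v, S.degree v = 2 * S.edgeFinset.card := S.sum_degrees_eq_twice_card_edges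
  have hsplit : ∑ v, S.degree v =
      ∑ v ∈ A1, S.degree v + ∑ v ∈ A2, S.degree v + ∑ v ∈ A3, S.degree v := by
    rw [← Finset.sum_union hA12, ← Finset.sum_union hA123, hcover]
  have hs1 : ∑ v ∈ A1, S.degree v = A1.card := by
    rw [Finset.sum_congr rfl (fun v hv => (Finset.mem_filter.1 hv).2), Finset.sum_const,
      smul_eq_mul, mul_one]
  have hs2 : ∑ v ∈ A2, S.degree v = 2 * A2.card := by
    rw [Finset.sum_congr rfl (fun v hv => (Finset.mem_filter.1 hv).2), Finset.sum_const,
      smul_eq_mul, mul_comm]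
  have hs3 : 3 * A3.card ≤ ∑ v ∈ A3, S.degree v := by
    have := Finset.card_nsmul_le_sum A3 (fun v => S.degree v) 3
      (fun v hv => (Finset.mem_filter.1 hv).2)
    simpa [mul_comm] using this
  have hcards : A1.card + A2.card + A3.card = Fintype.card W := by
    rw [← Finset.card_union_of_disjoint hA12, ← Finset.card_union_of_disjoint hA123, hcover]
    exact Finset.card_univ
  have hL : A3.card + 2 ≤ A1.card := by omega
  -- conclude
  refine ⟨x, hx2, c, fun u hu => ?_⟩
  have h1 : S.dist x u.1 ≤ m := by
    rw [← hEc]; exact eccAux_le _ _ _ _ hu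
  have hLn : {y : W | S.degree y = 1}.ncard = A1.card := by
    rw [Set.ncard_eq_toFinset_card', Set.toFinset_setOf]
  rw [hLn]
  omega

end StmtAux

/-- part of Lemma 10: Let `T` be a tree whose skeleton `S(T)` has at least
one vertex of degree 2, and with at most `ℓ - 1` penultimate vertices (leaves of `S(T)`).
Then `m ≤ (ℓ-1)/2`, where `m` is the minimum over degree-2 vertices `x` of `S(T)` of
`dep(x)`, the minimum over components `A` of `S(T) - x` of the maximal distance in `S(T)`
from `x` to a vertex of `A`.  Equivalently: there are a degree-2 vertex `x` of `S(T)` and a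
component of `S(T) - x` all of whose vertices are at distance at most `(ℓ-1)/2` from `x`
in `S(T)`. -/
theorem stmt_8 {V : Type*} [Fintype V] [DecidableEq V] (G : SimpleGraph V)
    [DecidableRel G.Adj] (hT : G.IsTree) (ℓ : ℕ) (hℓ : 1 ≤ ℓ)
    (hdeg2 : ∃ x : skeletonSet G, (skeleton G).degree x = 2)
    (hpen : {x : skeletonSet G | (skeleton G).degree x = 1}.ncard ≤ ℓ - 1) :
    ∃ x : skeletonSet G, (skeleton G).degree x = 2 ∧
      ∃ c : ((skeleton G).induce {y : skeletonSet G | y ≠ x}).ConnectedComponent,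
        ∀ u : {y : skeletonSet G // y ≠ x},
          ((skeleton G).induce {y : skeletonSet G | y ≠ x}).connectedComponentMk u = c →
            2 * (skeleton G).dist x u.1 ≤ ℓ - 1 := by
  obtain ⟨x₀, hx₀⟩ := hdeg2
  have hne : Nonempty ↥(skeletonSet G) := ⟨x₀⟩
  have hTree : (skeleton G).IsTree := by
    constructor
    · have := hne
      refine SimpleGraph.Connected.mk fun u v => ?_
      obtain ⟨p, hlen⟩ := hT.isConnected.exists_walk_length_eq_dist u.1 v.1
      have hsup : ∀ w ∈ p.support, w ∈ skeletonSet G := by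
        intro w hw
        obtain ⟨n, rfl, hn⟩ := SimpleGraph.Walk.mem_support_iff_exists_getVert.1 hw
        rcases Nat.eq_zero_or_pos n with rfl | hn0
        · rw [SimpleGraph.Walk.getVert_zero]; exact u.2
        rcases eq_or_lt_of_le hn with rfl | hnl
        · rw [SimpleGraph.Walk.getVert_length]; exact v.2
        obtain ⟨m, rfl⟩ : ∃ m, n = m + 1 := ⟨n - 1, by omega⟩
        have adj1 : G.Adj (p.getVert m) (p.getVert (m + 1)) := p.adj_getVert_succ (by omega)
        have adj2 : G.Adj (p.getVert (m + 1)) (p.getVert (m + 2)) :=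
          p.adj_getVert_succ (by omega)
        have d1 := (StmtAux.dist_getVert_eq p hlen (i := m) (by omega)).1
        have d2 := (StmtAux.dist_getVert_eq p hlen (i := m + 2) (by omega)).1
        have hne2 : p.getVert (m + 2) ≠ p.getVert m := by
          intro h; rw [h] at d2; omega
        exact StmtAux.two_le_degree_of_two_adj hne2.symm adj1.symm adj2
      exact StmtAux.induce_reachable_of_walk p hsup u.2 v.2
    · intro v c hc
      let f : skeleton G →g G := ⟨Subtype.val, fun {x y} h => h⟩
      have hinj : Function.Injective f := Subtype.val_injective
      exact hT.IsAcyclic _ (hc.map hinj)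
  obtain ⟨x, hx2, c, hc⟩ := StmtAux.tree_main (skeleton G) hTree x₀ hx₀
  exact ⟨x, hx2, c, fun u hu => le_trans (hc u hu) hpen⟩
end

section
/- Let T be a tree and x a leaf of its skeleton S(T) (a penultimate vertex). If the diameter of T is at least 2ℓ+1, then T - x consists of some isolated vertices together with exactly one component whose diameter is at least 2ℓ-1. -/
open Finset

namespace StmtAux

variable {V : Type*}

lemma exists_cons {G : SimpleGraph V} {a b : V} (r : G.Walk a b) (h : r.length ≠ 0) :
    ∃ (w : V) (hadj : G.Adj a w) (q : G.Walk w b), r = SimpleGraph.Walk.cons hadj q := by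
  cases r with
  | nil => simp at h
  | cons hadj q => exact ⟨_, hadj, q, rfl⟩

lemma walk_lift {G : SimpleGraph V} {s : Set V} :
    ∀ {u v : V} (p : G.Walk u v), (∀ w ∈ p.support, w ∈ s) →
      ∀ (hu : u ∈ s) (hv : v ∈ s),
      ∃ q : (G.induce s).Walk ⟨u, hu⟩ ⟨v, hv⟩, q.length = p.length := by
  intro u v p
  induction p with
  | nil => intro _ hu hv; exact ⟨SimpleGraph.Walk.nil, rfl⟩
  | @cons a b c h p ih =>
    intro hs ha hc
    have hb : b ∈ s := hs b (by simp)
    obtain ⟨q, hq⟩ := ih (fun z hz => hs z (by simp [hz])) hb hc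
    exact ⟨SimpleGraph.Walk.cons (by exact h) q, by show q.length + 1 = p.length + 1; rw [hq]⟩

lemma induce_dist_le {G : SimpleGraph V} {s : Set V} {a b : s}
    (h : (G.induce s).Reachable a b) : G.dist ↑a ↑b ≤ (G.induce s).dist a b := by
  obtain ⟨q, hq⟩ := h.exists_walk_length_eq_dist
  calc G.dist ↑a ↑b ≤ (q.map (SimpleGraph.Embedding.induce s).toHom).length :=
        SimpleGraph.dist_le _
    _ = q.length := SimpleGraph.Walk.length_map _ _
    _ = _ := hq

lemma tree_dist {G : SimpleGraph V} (hT : G.IsTree) {a b : V} (p : G.Walk a b)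
    (hp : p.IsPath) : G.dist a b = p.length := by
  obtain ⟨q, hq, hql⟩ := hT.isConnected.exists_path_of_dist a b
  have hpq : p = q := congrArg Subtype.val (hT.IsAcyclic.path_unique ⟨p, hp⟩ ⟨q, hq⟩)
  rw [hpq, hql]

lemma two_le_degree [Fintype V] [DecidableEq V] {G : SimpleGraph V} [DecidableRel G.Adj]
    {w a b : V} (ha : G.Adj w a) (hb : G.Adj w b) (hab : a ≠ b) : 2 ≤ G.degree w := by
  rw [← SimpleGraph.card_neighborFinset_eq_degree]
  have hsub : ({a, b} : Finset V) ⊆ G.neighborFinset w := by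
    intro z hz
    rw [SimpleGraph.mem_neighborFinset]
    rcases Finset.mem_insert.1 hz with rfl | hz
    · exact ha
    · rw [Finset.mem_singleton] at hz; subst hz; exact hb
  calc 2 = ({a, b} : Finset V).card := (Finset.card_pair hab).symm
    _ ≤ _ := Finset.card_le_card hsub

lemma side {G : SimpleGraph V} (hT : G.IsTree) {x t : V} (r : G.Walk x t) (hr : r.IsPath)
    (h1 : r.length ≠ 0) :
    ∃ (w : V) (hwx : w ∈ {v : V | v ≠ x}) (htx : t ∈ {v : V | v ≠ x})
      (_ : (G.induce {v : V | v ≠ x}).Walk ⟨w, hwx⟩ ⟨t, htx⟩),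
      G.dist w t + 1 = r.length := by
  obtain ⟨w, hadj, q, rfl⟩ := exists_cons r h1
  rw [SimpleGraph.Walk.cons_isPath_iff] at hr
  obtain ⟨hq, hxq⟩ := hr
  have hwx : w ≠ x := hadj.ne'
  have htx : t ≠ x := by intro h; subst h; exact hxq q.end_mem_support
  have hsup : ∀ z ∈ q.support, z ∈ {v : V | v ≠ x} := fun z hz hzx => hxq (hzx ▸ hz)
  obtain ⟨q', _⟩ := walk_lift q hsup hwx htx
  exact ⟨w, hwx, htx, q', by rw [tree_dist hT q hq]; simp⟩

end StmtAux

/-- Let `T` be a tree of diameter at least `2ℓ+1` and `x` a penultimate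
vertex (a leaf of the skeleton `S(T)`).  Then `T - x` consists of isolated vertices together
with exactly one component of diameter at least `2ℓ-1`. -/
theorem stmt_10 {V : Type*} [Fintype V] [DecidableEq V] (G : SimpleGraph V)
    [DecidableRel G.Adj] (hT : G.IsTree) (ℓ : ℕ) (hℓ : 1 ≤ ℓ)
    (x : skeletonSet G) (hx : (skeleton G).degree x = 1)
    (hdiam : ∃ u v : V, 2 * ℓ + 1 ≤ G.dist u v) :
    ∃ c : (G.induce {v : V | v ≠ ↑x}).ConnectedComponent,
      (∃ u v : {v : V // v ≠ ↑x},
        (G.induce {v : V | v ≠ ↑x}).connectedComponentMk u = c ∧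
        (G.induce {v : V | v ≠ ↑x}).connectedComponentMk v = c ∧
        2 * ℓ - 1 ≤ (G.induce {v : V | v ≠ ↑x}).dist u v) ∧
      ∀ c' : (G.induce {v : V | v ≠ ↑x}).ConnectedComponent, c' ≠ c →
        ∀ u v : {v : V // v ≠ ↑x},
          (G.induce {v : V | v ≠ ↑x}).connectedComponentMk u = c' →
          (G.induce {v : V | v ≠ ↑x}).connectedComponentMk v = c' → u = v := by
  classical
  obtain ⟨u, v, hd⟩ := hdiam
  have hconn := hT.isConnected
  obtain ⟨y0, hy0⟩ : ∃ y : ↥(skeletonSet G), (skeleton G).Adj x y := by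
    rw [← SimpleGraph.degree_pos_iff_exists_adj]
    omega
  have hxy : G.Adj ↑x ↑y0 := hy0
  have hyx : (↑y0 : V) ≠ ↑x := hxy.ne'
  -- any neighbor of `x` other than `y0` is a leaf whose unique neighbor is `x`
  have key : ∀ w : V, G.Adj (↑x) w → w ≠ ↑y0 → G.neighborFinset w = {(↑x : V)} := by
    intro w hw hwy
    have hdeg : G.degree w ≤ 1 := by
      by_contra hlt
      push_neg at hlt
      have hwS : w ∈ skeletonSet G := hlt
      have h2 : 2 ≤ (skeleton G).degree x :=
        StmtAux.two_le_degree (a := ⟨w, hwS⟩) (b := y0) (by exact hw) hy0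
          (by intro hcon; exact hwy (congrArg Subtype.val hcon))
      omega
    have hx_mem : (↑x : V) ∈ G.neighborFinset w := by
      rw [SimpleGraph.mem_neighborFinset]; exact hw.symm
    apply Finset.eq_singleton_iff_unique_mem.mpr
    refine ⟨hx_mem, fun z hz => ?_⟩
    have hcard := Finset.card_le_one.mp
      (by rwa [SimpleGraph.card_neighborFinset_eq_degree] : (G.neighborFinset w).card ≤ 1)
    exact hcard z hz _ hx_mem
  -- every vertex `≠ x` with a neighbor `≠ x` reaches `y0` in the induced graph
  have reachY : ∀ (a : V) (ha : a ≠ ↑x), (∃ b : V, b ≠ ↑x ∧ G.Adj a b) →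
      (G.induce {v : V | v ≠ ↑x}).Reachable ⟨a, ha⟩ ⟨↑y0, hyx⟩ := by
    rintro a hax ⟨b, hbx, hab⟩
    obtain ⟨w0⟩ := hconn.preconnected (↑x) a
    have hp : w0.bypass.IsPath := SimpleGraph.Walk.bypass_isPath w0
    have hpne : w0.bypass.length ≠ 0 := by
      intro h0
      exact hax (SimpleGraph.Walk.eq_of_length_eq_zero h0).symm
    obtain ⟨w, hadj, q, hq_eq⟩ := StmtAux.exists_cons w0.bypass hpne
    rw [hq_eq, SimpleGraph.Walk.cons_isPath_iff] at hp
    obtain ⟨hqp, hxq⟩ := hp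
    by_cases hwy : w = ↑y0
    · subst hwy
      have hsup : ∀ z ∈ q.support, z ∈ {v : V | v ≠ ↑x} := fun z hz hzx => hxq (hzx ▸ hz)
      obtain ⟨q', _⟩ := StmtAux.walk_lift q hsup hyx hax
      exact ⟨q'.reverse⟩
    · exfalso
      have hnbr := key w hadj hwy
      by_cases hq0 : q.length = 0
      · have hwa : w = a := SimpleGraph.Walk.eq_of_length_eq_zero hq0
        subst hwa
        have hbmem : b ∈ G.neighborFinset w := by
          rw [SimpleGraph.mem_neighborFinset]; exact hab
        rw [hnbr, Finset.mem_singleton] at hbmem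
        exact hbx hbmem
      · obtain ⟨z, hadj2, q2, hq2⟩ := StmtAux.exists_cons q hq0
        have hz : z ∈ G.neighborFinset w := by
          rw [SimpleGraph.mem_neighborFinset]; exact hadj2
        rw [hnbr, Finset.mem_singleton] at hz
        subst hz
        apply hxq
        rw [hq2, SimpleGraph.Walk.support_cons]
        exact List.mem_cons_of_mem _ q2.start_mem_support
  -- existence of two far-apart vertices in `T - x`
  obtain ⟨u', v', hreach, hdist⟩ :
      ∃ (u' v' : {v : V // v ≠ ↑x}),
        (G.induce {v : V | v ≠ ↑x}).Reachable u' v' ∧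
        2 * ℓ - 1 ≤ (G.induce {v : V | v ≠ ↑x}).dist u' v' := by
    obtain ⟨p, hp, hplen⟩ := hconn.exists_path_of_dist u v
    have hdlen : 2 * ℓ + 1 ≤ p.length := by omega
    by_cases hxp : (↑x : V) ∈ p.support
    · have hspec := SimpleGraph.Walk.take_spec p hxp
      set p₁ := p.takeUntil (↑x) hxp with hp₁def
      set p₂ := p.dropUntil (↑x) hxp with hp₂def
      have hlen : p₁.length + p₂.length = p.length := by
        rw [← hspec, SimpleGraph.Walk.length_append]
      have hp₁ : p₁.IsPath := hp.takeUntil hxp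
      have hp₂ : p₂.IsPath := hp.dropUntil hxp
      have hone : p₁.length ≤ 1 ∨ p₂.length ≤ 1 := by
        by_contra hcon
        push_neg at hcon
        obtain ⟨ha2, hb2⟩ := hcon
        obtain ⟨w₂, hadj₂, q₂, hq₂⟩ := StmtAux.exists_cons p₂ (by omega)
        have hp₂' := hp₂
        rw [hq₂, SimpleGraph.Walk.cons_isPath_iff] at hp₂'
        obtain ⟨hq₂p, hxq₂⟩ := hp₂'
        have hq₂len : q₂.length + 1 = p₂.length := by rw [hq₂]; simp
        obtain ⟨z₂, hadjz₂, q₂₂, hq₂₂⟩ := StmtAux.exists_cons q₂ (by omega)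
        have hz₂x : z₂ ≠ ↑x := by
          intro h
          apply hxq₂
          rw [hq₂₂, SimpleGraph.Walk.support_cons]
          exact List.mem_cons_of_mem _ (h ▸ q₂₂.start_mem_support)
        have hw₂deg : 2 ≤ G.degree w₂ :=
          StmtAux.two_le_degree hadj₂.symm hadjz₂ (Ne.symm hz₂x)
        set r := p₁.reverse with hrdef
        have hr : r.IsPath := hp₁.reverse
        have hrlen : r.length = p₁.length := SimpleGraph.Walk.length_reverse _
        obtain ⟨w₁, hadj₁, q₁, hq₁⟩ := StmtAux.exists_cons r (by omega)
        rw [hq₁, SimpleGraph.Walk.cons_isPath_iff] at hr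
        obtain ⟨hq₁p, hxq₁⟩ := hr
        have hq₁len : q₁.length + 1 = r.length := by rw [hq₁]; simp
        obtain ⟨z₁, hadjz₁, q₁₁, hq₁₁⟩ := StmtAux.exists_cons q₁ (by omega)
        have hz₁x : z₁ ≠ ↑x := by
          intro h
          apply hxq₁
          rw [hq₁₁, SimpleGraph.Walk.support_cons]
          exact List.mem_cons_of_mem _ (h ▸ q₁₁.start_mem_support)
        have hw₁deg : 2 ≤ G.degree w₁ :=
          StmtAux.two_le_degree hadj₁.symm hadjz₁ (Ne.symm hz₁x)
        have hw₁mem : w₁ ∈ p₁.support := by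
          have hmem : w₁ ∈ r.support := by
            rw [hq₁, SimpleGraph.Walk.support_cons]
            exact List.mem_cons_of_mem _ q₁.start_mem_support
          rwa [hrdef, SimpleGraph.Walk.support_reverse, List.mem_reverse] at hmem
        have hw₂mem : w₂ ∈ p₂.support.tail := by
          rw [hq₂, SimpleGraph.Walk.support_cons, List.tail_cons]
          exact q₂.start_mem_support
        have hnodup := hp.support_nodup
        have hsupeq : p.support = p₁.support ++ p₂.support.tail := by
          rw [← hspec, SimpleGraph.Walk.support_append]
        rw [hsupeq] at hnodup
        have hdisj := List.disjoint_of_nodup_append hnodup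
        have hww : w₁ ≠ w₂ := fun h => hdisj hw₁mem (h ▸ hw₂mem)
        have h2 : 2 ≤ (skeleton G).degree x :=
          StmtAux.two_le_degree (G := skeleton G) (a := ⟨w₁, hw₁deg⟩) (b := ⟨w₂, hw₂deg⟩)
            (by exact hadj₁) (by exact hadj₂)
            (by intro h; exact hww (congrArg Subtype.val h))
        omega
      rcases hone with h1 | h1
      · obtain ⟨w, hwx, htx, q', hq'dist⟩ := StmtAux.side hT p₂ hp₂ (by omega)
        refine ⟨⟨w, hwx⟩, ⟨v, htx⟩, ⟨q'⟩, ?_⟩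
        calc 2 * ℓ - 1 ≤ G.dist w v := by omega
          _ ≤ _ := StmtAux.induce_dist_le ⟨q'⟩
      · obtain ⟨w, hwx, htx, q', hq'dist⟩ := StmtAux.side hT p₁.reverse hp₁.reverse (by
          rw [SimpleGraph.Walk.length_reverse]; omega)
        rw [SimpleGraph.Walk.length_reverse] at hq'dist
        refine ⟨⟨w, hwx⟩, ⟨u, htx⟩, ⟨q'⟩, ?_⟩
        calc 2 * ℓ - 1 ≤ G.dist w u := by omega
          _ ≤ _ := StmtAux.induce_dist_le ⟨q'⟩
    · have hsup : ∀ z ∈ p.support, z ∈ {v : V | v ≠ ↑x} := fun z hz hzx => hxp (hzx ▸ hz)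
      obtain ⟨q', hq'⟩ := StmtAux.walk_lift p hsup
        (hsup u p.start_mem_support) (hsup v p.end_mem_support)
      refine ⟨⟨u, hsup u p.start_mem_support⟩, ⟨v, hsup v p.end_mem_support⟩, ⟨q'⟩, ?_⟩
      calc 2 * ℓ - 1 ≤ G.dist u v := by omega
        _ ≤ _ := StmtAux.induce_dist_le ⟨q'⟩
  refine ⟨(G.induce {v : V | v ≠ ↑x}).connectedComponentMk u',
    ⟨u', v', rfl, SimpleGraph.ConnectedComponent.sound hreach.symm, hdist⟩, ?_⟩
  have hune : u' ≠ v' := by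
    intro h
    subst h
    rw [SimpleGraph.dist_self] at hdist
    omega
  have hu'y : (G.induce {v : V | v ≠ ↑x}).Reachable u' ⟨↑y0, hyx⟩ := by
    obtain ⟨q⟩ := hreach
    cases q with
    | nil => exact absurd rfl hune
    | @cons _ m _ hadj q =>
      exact reachY ↑u' u'.2 ⟨↑m, m.2, hadj⟩
  intro c' hc' a b hac hbc
  by_contra hab
  have hreach_ab : (G.induce {v : V | v ≠ ↑x}).Reachable a b :=
    SimpleGraph.ConnectedComponent.exact (hac.trans hbc.symm)
  obtain ⟨q⟩ := hreach_ab
  cases q with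
  | nil => exact hab rfl
  | @cons _ m _ hadj q =>
    have hay : (G.induce {v : V | v ≠ ↑x}).Reachable a ⟨↑y0, hyx⟩ :=
      reachY ↑a a.2 ⟨↑m, m.2, hadj⟩
    apply hc'
    rw [← hac]
    exact SimpleGraph.ConnectedComponent.sound (hay.trans hu'y.symm)
end

section
/- Let T be a tree in which every internal vertex of every longest path of the skeleton S(T) has degree at least 3 in S(T) (i.e., S(T) has no vertex of degree 2), and suppose S(T) has at most ℓ-1 leaves, where ℓ ≥ 3. Then the diameter of S(T) is at most ℓ-2, and hence the diameter of T is at most ℓ. -/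
open Finset SimpleGraph

/-- Any internal vertex of a path has at least two neighbours. -/
lemma internal_two_le_degree {V : Type*} [Fintype V] [DecidableEq V] {G : SimpleGraph V}
    [DecidableRel G.Adj] :
    ∀ {a b : V} (p : G.Walk a b), p.IsPath → ∀ x ∈ p.support, x ≠ a → x ≠ b →
      2 ≤ G.degree x := by
  intro a b p
  induction p with
  | nil =>
    intro _ x hx hxa _
    simp only [SimpleGraph.Walk.support_nil, List.mem_singleton] at hx
    exact absurd hx hxa
  | @cons u w b h q ih =>
    intro hp x hx hxa hxb
    simp only [SimpleGraph.Walk.support_cons, List.mem_cons] at hx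
    rcases hx with rfl | hx
    · exact absurd rfl hxa
    rcases eq_or_ne x w with rfl | hxw
    · -- x is the second vertex
      cases q with
      | nil => exact absurd rfl hxb
      | @cons _ s _ h' q' =>
        have hus : u ≠ s := by
          rintro rfl
          exact ((SimpleGraph.Walk.cons_isPath_iff _ _).1 hp).2 (by simp)
        have hsub : ({u, s} : Finset V) ⊆ G.neighborFinset x := by
          intro z hz
          simp only [Finset.mem_insert, Finset.mem_singleton] at hz
          rcases hz with rfl | rfl
          · exact (SimpleGraph.mem_neighborFinset _ _ _).2 h.symm
          · exact (SimpleGraph.mem_neighborFinset _ _ _).2 h'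
        calc 2 = ({u, s} : Finset V).card := (Finset.card_pair hus).symm
          _ ≤ _ := Finset.card_le_card hsub
    · exact ih hp.of_cons x hx hxw hxb

/-- A walk whose support lies in `s` lifts to the induced subgraph. -/
lemma walk_induce {V : Type*} {G : SimpleGraph V} {s : Set V} :
    ∀ {a b : V} (p : G.Walk a b) (ha : a ∈ s) (hb : b ∈ s),
      (∀ v ∈ p.support, v ∈ s) →
      ∃ q : (G.induce s).Walk ⟨a, ha⟩ ⟨b, hb⟩, q.length = p.length := by
  intro a b p
  induction p with
  | nil => exact fun _ _ _ => ⟨.nil, rfl⟩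
  | @cons u w b h q ih =>
    intro ha hb hs
    have hw : w ∈ s := hs w (by simp)
    obtain ⟨q', hq'⟩ := ih hw hb (fun v hv => hs v (by simp [hv]))
    exact ⟨.cons (by exact h) q', by exact congrArg (· + 1) hq'⟩

lemma one_le_degree_of_connected {W : Type*} [Fintype W] [DecidableEq W]
    {S : SimpleGraph W} [DecidableRel S.Adj] (hc : S.Connected)
    (h2 : 2 ≤ Fintype.card W) (v : W) : 1 ≤ S.degree v := by
  obtain ⟨u, hu⟩ := Fintype.exists_ne_of_one_lt_card (by omega) v
  obtain ⟨p⟩ := hc.preconnected v u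
  cases p with
  | nil => exact absurd rfl hu.symm
  | cons h q => exact (S.degree_pos_iff_exists_adj v).2 ⟨_, h⟩

/-- Counting: in a finite tree with at least two vertices and no vertex of degree 2,
the number of branch vertices is at most the number of leaves minus 2. -/
lemma branch_count {W : Type*} [Fintype W] [DecidableEq W]
    (S : SimpleGraph W) [DecidableRel S.Adj] (hS : S.IsTree)
    (h2 : 2 ≤ Fintype.card W) (hdeg2 : ∀ x, S.degree x ≠ 2) :
    (Finset.univ.filter fun x => 3 ≤ S.degree x).card + 2 ≤
      (Finset.univ.filter fun x => S.degree x = 1).card := by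
  classical
  set L := Finset.univ.filter fun x => S.degree x = 1 with hL
  set B := Finset.univ.filter fun x => 3 ≤ S.degree x with hB
  have hdisj : Disjoint L B := by
    rw [Finset.disjoint_left]
    intro x hx hx'
    simp only [hL, hB, Finset.mem_filter] at hx hx'
    omega
  have hunion : L ∪ B = Finset.univ := by
    ext x
    have h1 := one_le_degree_of_connected hS.isConnected h2 x
    have h3 := hdeg2 x
    simp only [hL, hB, Finset.mem_union, Finset.mem_filter, Finset.mem_univ, true_and,
      iff_true]
    omega
  have hsum : ∑ x, S.degree x + 2 = 2 * Fintype.card W := by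
    rw [S.sum_degrees_eq_twice_card_edges, ← hS.card_edgeFinset]
    ring
  have hsplit : ∑ x, S.degree x = ∑ x ∈ L, S.degree x + ∑ x ∈ B, S.degree x := by
    rw [← Finset.sum_union hdisj, hunion]
  have hLsum : ∑ x ∈ L, S.degree x = L.card := by
    rw [Finset.sum_congr rfl (fun x hx => (Finset.mem_filter.1 hx).2)]
    simp [hL]
  have hBsum : 3 * B.card ≤ ∑ x ∈ B, S.degree x := by
    calc 3 * B.card = ∑ _x ∈ B, 3 := by rw [Finset.sum_const]; ring
      _ ≤ _ := Finset.sum_le_sum (fun x hx => (Finset.mem_filter.1 hx).2)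
  have hcard : L.card + B.card = Fintype.card W := by
    rw [← Finset.card_union_of_disjoint hdisj, hunion, Finset.card_univ]
  omega

/-- The second vertex of a path of length ≥ 2 is internal. -/
lemma exists_internal_snd {V : Type*} {G : SimpleGraph V} {u v : V}
    (p : G.Walk u v) (hp : p.IsPath) (h2 : 2 ≤ p.length) :
    ∃ x, G.Adj u x ∧ x ∈ p.support ∧ x ≠ u ∧ x ≠ v := by
  cases p with
  | nil => simp at h2
  | @cons _ w _ h q =>
    refine ⟨w, h, by simp, h.ne', ?_⟩
    rintro rfl
    have hq : q.IsPath := ((SimpleGraph.Walk.cons_isPath_iff _ _).1 hp).1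
    rw [SimpleGraph.Walk.isPath_iff_eq_nil] at hq
    subst hq
    simp at h2

open Finset

/-- Let `T` be a tree whose skeleton `S(T)` has no vertex of degree 2 and
at most `ℓ - 1` leaves, where `ℓ ≥ 3`.  Then the diameter of `S(T)` is at most `ℓ - 2`, and
hence the diameter of `T` is at most `ℓ`. -/
theorem stmt_12 {V : Type*} [Fintype V] [DecidableEq V] (G : SimpleGraph V)
    [DecidableRel G.Adj] (hT : G.IsTree) (ℓ : ℕ) (hℓ : 3 ≤ ℓ)
    (hdeg2 : ∀ x : skeletonSet G, (skeleton G).degree x ≠ 2)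
    (hleaves : {x : skeletonSet G | (skeleton G).degree x = 1}.ncard ≤ ℓ - 1) :
    (∀ a b : skeletonSet G, (skeleton G).dist a b ≤ ℓ - 2) ∧
    (∀ u v : V, G.dist u v ≤ ℓ) := by
  classical
  have hconn : G.Connected := hT.isConnected
  -- skeleton is acyclic
  have hacyc : (skeleton G).IsAcyclic := by
    intro v c hc
    exact hT.IsAcyclic (c.map (SimpleGraph.Embedding.induce (skeletonSet G)).toHom)
      (hc.map Subtype.val_injective)
  -- skeleton is preconnected
  have hreach : ∀ a b : skeletonSet G, (skeleton G).Reachable a b := by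
    intro a b
    obtain ⟨w⟩ := hconn.preconnected (a : V) (b : V)
    have hw : w.toPath.val.IsPath := w.toPath.2
    have hsupp : ∀ v ∈ (w.toPath : G.Walk (a : V) (b : V)).support, v ∈ skeletonSet G := by
      intro v hv
      rcases eq_or_ne v (a : V) with rfl | hva
      · exact a.2
      rcases eq_or_ne v (b : V) with rfl | hvb
      · exact b.2
      · exact internal_two_le_degree _ hw v hv hva hvb
    obtain ⟨q, -⟩ := walk_induce (w.toPath : G.Walk (a : V) (b : V)) a.2 b.2 hsupp
    exact ⟨q.copy (Subtype.ext rfl) (Subtype.ext rfl)⟩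
  -- leaves bound as a Finset
  have hleaves' : (Finset.univ.filter fun x : skeletonSet G =>
      (skeleton G).degree x = 1).card ≤ ℓ - 1 := by
    classical
    rwa [Set.ncard_eq_toFinset_card', Set.toFinset_setOf] at hleaves
  -- main skeleton distance bound
  have hskel : ∀ a b : skeletonSet G, (skeleton G).dist a b ≤ ℓ - 2 := by
    intro a b
    obtain ⟨q, hq, hqlen⟩ := (hreach a b).exists_path_of_dist
    rw [← hqlen]
    rcases Nat.eq_zero_or_pos q.length with h0 | h0
    · omega
    -- a ≠ b, so the skeleton has at least two vertices
    have hab : a ≠ b := by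
      rintro rfl
      rw [SimpleGraph.Walk.isPath_iff_eq_nil] at hq
      subst hq
      simp at h0
    have h2 : 2 ≤ Fintype.card (skeletonSet G) :=
      Fintype.one_lt_card_iff_nontrivial.2 ⟨a, b, hab⟩
    have htree : (skeleton G).IsTree := by
      refine ⟨?_, hacyc⟩
      haveI : Nonempty (skeletonSet G) := ⟨a⟩
      exact SimpleGraph.Connected.mk (fun x y => hreach x y)
    have hcount := branch_count (skeleton G) htree h2 hdeg2
    -- support of q is contained in branch vertices plus endpoints
    have hsub : q.support.toFinset ⊆
        (Finset.univ.filter fun x : skeletonSet G => 3 ≤ (skeleton G).degree x) ∪ {a, b} := by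
      intro x hx
      rw [List.mem_toFinset] at hx
      rcases eq_or_ne x a with rfl | hxa
      · simp
      rcases eq_or_ne x b with rfl | hxb
      · simp
      have h2x := internal_two_le_degree q hq x hx hxa hxb
      have := hdeg2 x
      simp only [Finset.mem_union, Finset.mem_filter, Finset.mem_univ, true_and]
      left; omega
    have hcard1 : q.support.toFinset.card = q.length + 1 := by
      rw [List.toFinset_card_of_nodup hq.support_nodup, SimpleGraph.Walk.length_support]
    have hcard2 := Finset.card_le_card hsub
    have hcard3 := Finset.card_union_le
      (Finset.univ.filter fun x : skeletonSet G => 3 ≤ (skeleton G).degree x)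
      ({a, b} : Finset (skeletonSet G))
    have hpair : ({a, b} : Finset (skeletonSet G)).card ≤ 2 :=
      Finset.card_insert_le _ _ |>.trans (by simp)
    omega
  refine ⟨hskel, ?_⟩
  intro u v
  rcases le_or_gt (G.dist u v) 2 with hd | hd
  · omega
  obtain ⟨p, hp, hplen⟩ := (hconn.preconnected u v).exists_path_of_dist
  have hplen3 : 3 ≤ p.length := by omega
  obtain ⟨x, hux, hxs, hxu, hxv⟩ := exists_internal_snd p hp (by omega)
  obtain ⟨y, hvy, hys, hyv, hyu⟩ := exists_internal_snd p.reverse hp.reverse (by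
    rw [SimpleGraph.Walk.length_reverse]; omega)
  rw [SimpleGraph.Walk.support_reverse, List.mem_reverse] at hys
  have hxS : x ∈ skeletonSet G := internal_two_le_degree p hp x hxs hxu hxv
  have hyS : y ∈ skeletonSet G := internal_two_le_degree p hp y hys hyu hyv
  -- distance from x to y in G is at most ℓ - 2
  have hxy : G.dist x y ≤ ℓ - 2 := by
    obtain ⟨q, hq, hqlen⟩ := (hreach ⟨x, hxS⟩ ⟨y, hyS⟩).exists_path_of_dist
    have := SimpleGraph.dist_le (q.map (SimpleGraph.Embedding.induce (skeletonSet G)).toHom)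
    rw [SimpleGraph.Walk.length_map, hqlen] at this
    exact this.trans (hskel _ _)
  have t1 : G.dist u v ≤ G.dist u x + G.dist x v := hconn.dist_triangle
  have t2 : G.dist x v ≤ G.dist x y + G.dist y v := hconn.dist_triangle
  have dux : G.dist u x ≤ 1 := by
    have := SimpleGraph.dist_le (SimpleGraph.Walk.cons hux SimpleGraph.Walk.nil)
    simpa using this
  have dyv : G.dist y v ≤ 1 := by
    have := SimpleGraph.dist_le (SimpleGraph.Walk.cons hvy.symm SimpleGraph.Walk.nil)
    rw [SimpleGraph.dist_comm] at *
    simpa using this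
  omega
end

section
/- For every pair of integers d ≥ 2 and g ≥ 3 there exists a d-regular graph with girth exactly g. -/
open SimpleGraph

section ES


variable {V : Type*}

/-- From a cycle through edge `s(a,b)`, extract a walk from `a` to `b` avoiding that edge,
of length at most `c.length - 1`. -/
lemma cycle_peel {K : SimpleGraph V} {w a b : V} (c : K.Walk w w) (hc : c.IsCycle)
    (he : s(a, b) ∈ c.edges) :
    ∃ p : K.Walk a b, s(a, b) ∉ p.edges ∧ p.length + 1 ≤ c.length := by
  classical
  have ha : a ∈ c.support := c.fst_mem_support_of_mem_edges he
  set c' := c.rotate a ha with hc'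
  have hc'c : c'.IsCycle := hc.rotate ha
  have hedges : c'.edges ~r c.edges := c.rotate_edges a ha
  have he' : s(a, b) ∈ c'.edges := (hedges.perm.mem_iff).mpr he
  have hlen : c'.length = c.length := by
    have := hedges.perm.length_eq
    simpa [Walk.length_edges] using this
  clear_value c'
  cases c' with
  | nil => exact absurd rfl hc'c.ne_nil
  | cons hadj q =>
    rename_i v
    rw [Walk.cons_isCycle_iff] at hc'c
    obtain ⟨hq, hnotq⟩ := hc'c
    rw [Walk.edges_cons, List.mem_cons] at he'
    rcases he' with he' | he'
    · -- the edge is the first edge, so v = b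
      have hvb : v = b := by
        rw [Sym2.eq_iff] at he'
        rcases he' with ⟨-, h⟩ | ⟨h1, h2⟩
        · exact h.symm
        · exact absurd h1 hadj.ne
      subst hvb
      refine ⟨q.reverse, ?_, ?_⟩
      · simpa using hnotq
      · simp [← hlen]
    · -- the edge is inside q
      have hvb : v ≠ b := by
        rintro rfl
        exact hnotq he'
      have hab : a ≠ b := (c.adj_of_mem_edges he).ne
      have hb : b ∈ q.support := q.snd_mem_support_of_mem_edges he'
      have hane : a ∉ (q.takeUntil b hb).support := by
        intro hmem
        have hspec := q.take_spec hb
        have hnd : q.support.Nodup := hq.support_nodup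
        have : q.support = (q.takeUntil b hb).support ++ (q.dropUntil b hb).support.tail := by
          rw [← Walk.support_append, hspec]
        rw [this] at hnd
        have hdisj := (List.disjoint_of_nodup_append hnd)
        have hnotnil : ¬ (q.dropUntil b hb).Nil := by
          intro hnil
          exact hab (show a = b by simpa using hnil.eq.symm)
        have haa : a ∈ (q.dropUntil b hb).support.tail := by
          cases hdrop : q.dropUntil b hb with
          | nil => exact absurd (by rw [hdrop]; constructor) hnotnil
          | cons h r => simp [hdrop]
        exact hdisj hmem haa
      have hnot1 : s(a, b) ∉ (q.takeUntil b hb).edges := by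
        intro hmem
        exact hane ((q.takeUntil b hb).fst_mem_support_of_mem_edges hmem)
      refine ⟨Walk.cons hadj (q.takeUntil b hb), ?_, ?_⟩
      · rw [Walk.edges_cons, List.mem_cons]
        rintro (h | h)
        · exact hnotq (h ▸ he')
        · exact hnot1 h
      · have hlq : (q.takeUntil b hb).length + (q.dropUntil b hb).length = q.length := by
          have hspec := q.take_spec hb
          conv_rhs => rw [← hspec]
          rw [Walk.length_append]
        have hpos : 0 < (q.dropUntil b hb).length := by
          by_contra hle
          push_neg at hle
          interval_cases h : (q.dropUntil b hb).length
          · exact hab (Walk.eq_of_length_eq_zero h).symm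
        rw [Walk.length_cons] at hlen
        simp only [Walk.length_cons]
        omega



/-- All cycles of `H` plus one extra edge are long, provided cycles of `H` are long and the
extra edge joins far-apart vertices. -/
lemma cycles_addEdge {H : SimpleGraph V} {a b : V} (g : ℕ)
    (hH : ∀ u (c : H.Walk u u), c.IsCycle → g ≤ c.length)
    (hdist : (g : ℕ∞) ≤ H.edist a b + 1) :
    ∀ u (c : (H ⊔ fromEdgeSet {s(a, b)}).Walk u u), c.IsCycle → g ≤ c.length := by
  classical
  intro u c hc
  have hKe : ∀ e ∈ (H ⊔ fromEdgeSet {s(a, b)}).edgeSet, e = s(a, b) ∨ e ∈ H.edgeSet := by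
    intro e hee
    rw [edgeSet_sup, edgeSet_fromEdgeSet] at hee
    rcases hee with h | h
    · exact Or.inr h
    · exact Or.inl h.1
  by_cases hmem : s(a, b) ∈ c.edges
  · obtain ⟨p, hpe, hple⟩ := cycle_peel c hc hmem
    have hsub : ∀ e ∈ p.edges, e ∈ H.edgeSet := by
      intro e hee
      rcases hKe e (p.edges_subset_edgeSet hee) with h | h
      · exact absurd (h ▸ hee) hpe
      · exact h
    have hlb : H.edist a b ≤ p.length := by
      have := (p.transfer H hsub).edist_le
      rwa [Walk.length_transfer] at this
    have : (g : ℕ∞) ≤ (p.length : ℕ∞) + 1 :=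
      hdist.trans (add_le_add_left hlb 1)
    have : (g : ℕ∞) ≤ ((p.length + 1 : ℕ) : ℕ∞) := by
      rwa [Nat.cast_add, Nat.cast_one]
    exact le_trans (Nat.cast_le.mp this) hple
  · have hsub : ∀ e ∈ c.edges, e ∈ H.edgeSet := by
      intro e hee
      rcases hKe e (c.edges_subset_edgeSet hee) with h | h
      · exact absurd (h ▸ hee) hmem
      · exact h
    have := hH u (c.transfer H hsub) (hc.transfer hsub)
    rwa [Walk.length_transfer] at this

private noncomputable def m3 (H : SimpleGraph V) (a b s t : V) : ℕ∞ :=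
  min (H.edist s t) (min (H.edist s a + 1 + H.edist b t) (H.edist s b + 1 + H.edist a t))

private lemma m3_le_walk {H : SimpleGraph V} {a b : V} :
    ∀ {s t : V} (w : (H ⊔ fromEdgeSet {s(a, b)}).Walk s t), m3 H a b s t ≤ w.length := by
  intro s t w
  induction w with
  | nil =>
    refine le_trans (min_le_left _ _) ?_
    simp
  | @cons s u t hadj w ih =>
    have key : m3 H a b s t ≤ m3 H a b u t + 1 := by
      rcases hadj with hH | hnew
      · -- a step along an `H`-edge
        have h1 : H.edist s u ≤ 1 := by
          have := H.edist_le hH.toWalk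
          simpa using this
        have e1 : H.edist s t ≤ H.edist u t + 1 := by
          calc H.edist s t ≤ H.edist s u + H.edist u t := SimpleGraph.edist_triangle
          _ ≤ 1 + H.edist u t := add_le_add_left h1 _
          _ = H.edist u t + 1 := by rw [add_comm]
        have e2 : H.edist s a + 1 + H.edist b t ≤ (H.edist u a + 1 + H.edist b t) + 1 := by
          have : H.edist s a ≤ H.edist u a + 1 := by
            calc H.edist s a ≤ H.edist s u + H.edist u a := SimpleGraph.edist_triangle
            _ ≤ 1 + H.edist u a := add_le_add_left h1 _
            _ = H.edist u a + 1 := by rw [add_comm]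
          calc H.edist s a + 1 + H.edist b t ≤ (H.edist u a + 1) + 1 + H.edist b t := by
                exact add_le_add_left (add_le_add_left this 1) _
          _ = (H.edist u a + 1 + H.edist b t) + 1 := by ring
        have e3 : H.edist s b + 1 + H.edist a t ≤ (H.edist u b + 1 + H.edist a t) + 1 := by
          have : H.edist s b ≤ H.edist u b + 1 := by
            calc H.edist s b ≤ H.edist s u + H.edist u b := SimpleGraph.edist_triangle
            _ ≤ 1 + H.edist u b := add_le_add_left h1 _
            _ = H.edist u b + 1 := by rw [add_comm]
          calc H.edist s b + 1 + H.edist a t ≤ (H.edist u b + 1) + 1 + H.edist a t := by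
                exact add_le_add_left (add_le_add_left this 1) _
          _ = (H.edist u b + 1 + H.edist a t) + 1 := by ring
        rw [m3, m3, ← min_add_add_right, ← min_add_add_right]
        exact le_min (le_trans (min_le_left _ _) e1)
          (le_min (le_trans (min_le_right _ _) (le_trans (min_le_left _ _) e2))
            (le_trans (min_le_right _ _) (le_trans (min_le_right _ _) e3)))
      · -- a step across the new edge
        rw [fromEdgeSet_adj, Set.mem_singleton_iff, Sym2.eq_iff] at hnew
        obtain ⟨h1 | h1, -⟩ := hnew
        · obtain ⟨h1a, h1b⟩ := h1
          rw [h1a, h1b]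
          have t2 : m3 H a b a t ≤ H.edist b t + 1 := by
            refine le_trans (min_le_right _ _) (le_trans (min_le_left _ _) ?_)
            simp [add_comm]
          rw [m3, m3, ← min_add_add_right, ← min_add_add_right]
          refine le_min ?_ (le_min ?_ ?_)
          · exact t2
          · exact le_trans t2 (by
              refine add_le_add_left ?_ 1
              exact le_add_self)
          · refine le_trans (min_le_left _ _) ?_
            have : H.edist b b + 1 + H.edist a t + 1 = H.edist a t + 2 := by
              rw [SimpleGraph.edist_self]; ring
            rw [this]
            exact le_add_right le_rfl
        · obtain ⟨h1a, h1b⟩ := h1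
          rw [h1a, h1b]
          have t3 : m3 H a b b t ≤ H.edist a t + 1 := by
            refine le_trans (min_le_right _ _) (le_trans (min_le_right _ _) ?_)
            simp [add_comm]
          rw [m3, m3, ← min_add_add_right, ← min_add_add_right]
          refine le_min ?_ (le_min ?_ ?_)
          · exact t3
          · refine le_trans (min_le_left _ _) ?_
            have : H.edist a a + 1 + H.edist b t + 1 = H.edist b t + 2 := by
              rw [SimpleGraph.edist_self]; ring
            rw [this]
            exact le_add_right le_rfl
          · exact le_trans t3 (add_le_add_left le_add_self 1)
    refine le_trans key ?_
    have : (Walk.cons hadj w).length = w.length + 1 := Walk.length_cons _ _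
    rw [this, Nat.cast_add, Nat.cast_one]
    exact add_le_add_left ih 1

/-- Lower bound on distances in `H` plus one extra edge. -/
lemma edist_addEdge_ge {H : SimpleGraph V} {a b s t : V} :
    min (H.edist s t) (min (H.edist s a + 1 + H.edist b t) (H.edist s b + 1 + H.edist a t))
      ≤ (H ⊔ fromEdgeSet {s(a, b)}).edist s t := by
  rw [SimpleGraph.edist_eq_sInf]
  refine le_sInf ?_
  rintro x ⟨w, rfl⟩
  exact m3_le_walk w

/-- After deleting an edge of a graph all of whose cycles are long, its endpoints are far
apart. -/
lemma edist_deleteEdge_ge {H : SimpleGraph V} {a b : V} (hab : H.Adj a b) (g : ℕ)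
    (hH : ∀ u (c : H.Walk u u), c.IsCycle → g ≤ c.length) :
    (g : ℕ∞) ≤ (H.deleteEdges {s(a, b)}).edist a b + 1 := by
  classical
  by_contra hlt
  push_neg at hlt
  have hne : (H.deleteEdges {s(a, b)}).edist a b ≠ ⊤ := by
    intro h
    rw [h] at hlt
    simp at hlt
  obtain ⟨p, hp⟩ := SimpleGraph.exists_walk_of_edist_ne_top hne
  have hsub : ∀ e ∈ p.bypass.edges, e ∈ H.edgeSet := by
    intro e hee
    have := p.bypass.edges_subset_edgeSet hee
    rw [edgeSet_deleteEdges] at this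
    exact this.1
  set q := p.bypass.transfer H hsub with hq
  have hqpath : q.IsPath := p.bypass_isPath.transfer _
  have hqe : s(b, a) ∉ q.edges := by
    rw [hq, Walk.edges_transfer]
    intro hmem
    have h2 := p.bypass.edges_subset_edgeSet hmem
    rw [edgeSet_deleteEdges] at h2
    exact h2.2 (Set.mem_singleton_iff.mpr Sym2.eq_swap)
  have hcyc : (Walk.cons hab.symm q).IsCycle := by
    rw [Walk.cons_isCycle_iff]
    exact ⟨hqpath, hqe⟩
  have hlen := hH b (Walk.cons hab.symm q) hcyc
  rw [Walk.length_cons] at hlen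
  have hql : q.length ≤ p.length := by
    rw [hq, Walk.length_transfer]
    exact p.length_bypass_le
  have : (g : ℕ∞) ≤ (H.deleteEdges {s(a, b)}).edist a b + 1 := by
    rw [← hp]
    have : (g : ℕ∞) ≤ ((p.length + 1 : ℕ) : ℕ∞) := by
      exact_mod_cast le_trans hlen (by omega)
    rwa [Nat.cast_add, Nat.cast_one] at this
  exact absurd this (not_le.mpr hlt)

section balls


variable {V : Type*} [Fintype V] [DecidableEq V]

/-- Finset of vertices within distance `k` of `u`. -/
def gball (G : SimpleGraph V) [DecidableRel G.Adj] (u : V) : ℕ → Finset V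
  | 0 => {u}
  | k + 1 => gball G u k ∪ (gball G u k).biUnion (fun v => G.neighborFinset v)

lemma gball_mono (G : SimpleGraph V) [DecidableRel G.Adj] (u : V) {j k : ℕ} (h : j ≤ k) :
    gball G u j ⊆ gball G u k := by
  induction k with
  | zero => simpa [Nat.le_zero.mp h]
  | succ k ih =>
    rcases Nat.lt_or_ge j (k+1) with h' | h'
    · exact (ih (by omega)).trans (by simp [gball])
    · have : j = k + 1 := by omega
      simp [this]

lemma card_gball_le (G : SimpleGraph V) [DecidableRel G.Adj] (u : V) {d : ℕ}
    (hdeg : ∀ v, G.degree v ≤ d) (k : ℕ) : (gball G u k).card ≤ (d + 1) ^ k := by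
  induction k with
  | zero => simp [gball]
  | succ k ih =>
    have h1 : (gball G u (k+1)).card ≤ (gball G u k).card + ((gball G u k).biUnion (fun v => G.neighborFinset v)).card :=
      Finset.card_union_le _ _
    have h2 : ((gball G u k).biUnion (fun v => G.neighborFinset v)).card ≤ (gball G u k).card * d := by
      refine le_trans (Finset.card_biUnion_le) ?_
      refine le_trans (Finset.sum_le_sum fun v _ => ?_) (by rw [Finset.sum_const, smul_eq_mul])
      exact hdeg v
    calc (gball G u (k+1)).card ≤ (gball G u k).card * (d + 1) := by
          have h3 : (gball G u k).card * (d+1) = (gball G u k).card * d + (gball G u k).card := by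
            ring
          omega
    _ ≤ (d + 1) ^ k * (d + 1) := by
          exact Nat.mul_le_mul_right _ ih
    _ = (d + 1) ^ (k + 1) := by ring

lemma walk_mem_gball (G : SimpleGraph V) [DecidableRel G.Adj] (u : V) :
    ∀ {y x : V} (w : G.Walk y x) (j k : ℕ), y ∈ gball G u j → j + w.length ≤ k →
      x ∈ gball G u k := by
  intro y x w
  induction w with
  | nil =>
    intro j k hy hjk
    exact gball_mono G u (by omega) hy
  | @cons y z x hadj w ih =>
    intro j k hy hjk
    have hz : z ∈ gball G u (j + 1) := by
      rw [gball]
      refine Finset.mem_union_right _ (Finset.mem_biUnion.mpr ⟨y, hy, ?_⟩)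
      rwa [SimpleGraph.mem_neighborFinset]
    refine ih (j+1) k hz ?_
    rw [Walk.length_cons] at hjk
    omega

lemma edist_ge_of_not_mem_gball {G : SimpleGraph V} [DecidableRel G.Adj] {u x : V} {R : ℕ}
    (h : x ∉ gball G u R) : ((R : ℕ∞) + 1) ≤ G.edist u x := by
  by_contra hlt
  push_neg at hlt
  have hne : G.edist u x ≠ ⊤ := by
    intro htop
    rw [htop] at hlt
    exact (not_top_lt) hlt
  obtain ⟨p, hp⟩ := SimpleGraph.exists_walk_of_edist_ne_top hne
  have hlen : (p.length : ℕ∞) < (R : ℕ∞) + 1 := by rw [hp]; exact hlt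
  have : p.length ≤ R := by
    have : (p.length : ℕ∞) < ((R + 1 : ℕ) : ℕ∞) := by rwa [Nat.cast_add, Nat.cast_one]
    exact_mod_cast Nat.lt_succ_iff.mp (by exact_mod_cast this)
  exact h (walk_mem_gball G u p 0 R (by simp [gball]) (by omega))

/-- There is a vertex far from `u` and `v` and avoiding `S`, provided `V` is big enough. -/
lemma exists_far_vertex (G : SimpleGraph V) [DecidableRel G.Adj] {d : ℕ}
    (hdeg : ∀ v, G.degree v ≤ d) (u v : V) (S : Finset V) (R : ℕ)
    (hcard : 2 * (d + 1) ^ R + S.card < Fintype.card V) :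
    ∃ x, x ∉ S ∧ ((R : ℕ∞) ≤ G.edist u x) ∧ ((R : ℕ∞) ≤ G.edist v x) := by
  rcases Nat.eq_zero_or_pos R with rfl | hR
  · -- trivial for R = 0
    have : (Finset.univ \ S).Nonempty := by
      refine Finset.sdiff_nonempty.mpr ?_
      intro hsub
      have := Finset.card_le_card hsub
      rw [Finset.card_univ] at this
      omega
    obtain ⟨x, hx⟩ := this
    exact ⟨x, (Finset.mem_sdiff.mp hx).2, by simp, by simp⟩
  · obtain ⟨R', rfl⟩ : ∃ R', R = R' + 1 := ⟨R - 1, by omega⟩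
    let A := gball G u R' ∪ gball G v R' ∪ S
    have hAcard : (gball G u R' ∪ gball G v R' ∪ S).card < Fintype.card V := by
      have := Finset.card_union_le (gball G u R' ∪ gball G v R') S
      have h2 := Finset.card_union_le (gball G u R') (gball G v R')
      have b1 := card_gball_le G u hdeg R'
      have b2 := card_gball_le G v hdeg R'
      have hpow : (d+1)^R' ≤ (d+1)^(R'+1) := Nat.pow_le_pow_right (by omega) (by omega)
      omega
    have : (Finset.univ \ (gball G u R' ∪ gball G v R' ∪ S)).Nonempty := by
      refine Finset.sdiff_nonempty.mpr ?_
      intro hsub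
      have := Finset.card_le_card hsub
      rw [Finset.card_univ] at this
      omega
    obtain ⟨x, hx⟩ := this
    rw [Finset.mem_sdiff] at hx
    have hx' := hx.2
    simp only [Finset.mem_union, not_or] at hx'
    refine ⟨x, hx'.2, ?_, ?_⟩
    · have := edist_ge_of_not_mem_gball hx'.1.1
      simpa [Nat.cast_add, Nat.cast_one] using this
    · have := edist_ge_of_not_mem_gball hx'.1.2
      simpa [Nat.cast_add, Nat.cast_one] using this

end balls

section base


/-- Base graph: a `g`-cycle on the first `g` vertices of `Fin n`, everything else isolated. -/
def baseGraph (n g : ℕ) : SimpleGraph (Fin n) where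
  Adj a b := a ≠ b ∧ a.val < g ∧ b.val < g ∧
    ((a.val + 1) % g = b.val ∨ (b.val + 1) % g = a.val)
  symm := by
    constructor
    rintro a b ⟨h1, h2, h3, h4⟩
    exact ⟨h1.symm, h3, h2, h4.symm⟩
  loopless := by constructor; rintro a ⟨h1, -⟩; exact h1 rfl

variable {n g : ℕ}

private def StepUp (g : ℕ) {n : ℕ} (D : (baseGraph n g).Dart) : Prop :=
  ((D.snd.val : ZMod g)) = (D.fst.val : ZMod g) + 1

private def StepDown (g : ℕ) {n : ℕ} (D : (baseGraph n g).Dart) : Prop :=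
  ((D.fst.val : ZMod g)) = (D.snd.val : ZMod g) + 1

private lemma step_up_or_down (D : (baseGraph n g).Dart) : StepUp g D ∨ StepDown g D := by
  obtain ⟨-, -, -, h | h⟩ := D.adj
  · left
    rw [StepUp, ← h]
    push_cast
    simp
  · right
    rw [StepDown, ← h]
    push_cast
    simp

private lemma fin_eq_of_zmod (hg : 0 < g) {a b : Fin n} (ha : a.val < g) (hb : b.val < g)
    (h : ((a.val : ZMod g)) = (b.val : ZMod g)) : a = b := by
  haveI : NeZero g := ⟨by omega⟩
  have := congrArg ZMod.val h
  rw [ZMod.val_natCast_of_lt ha, ZMod.val_natCast_of_lt hb] at this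
  exact Fin.ext this

/-- In a trail of the base graph, all steps go the same way around the cycle. -/
private lemma steps_uniform (hg : 3 ≤ g) :
    ∀ {y x : Fin n} (w : (baseGraph n g).Walk y x), w.IsTrail →
      (∀ D ∈ w.darts, StepUp g D) ∨ (∀ D ∈ w.darts, StepDown g D) := by
  intro y x w
  induction w with
  | nil => intro _; left; intro D hD; simp at hD
  | @cons y z x hadj w ih =>
    intro ht
    have htw : w.IsTrail := ht.of_cons
    have hne : s(y, z) ∉ w.edges := ((Walk.isTrail_cons _ _).mp ht).2
    rcases ih htw with hup | hdown
    · rcases step_up_or_down ⟨(y, z), hadj⟩ with h0 | h0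
      · -- all up
        left
        intro D hD
        rw [Walk.darts_cons, List.mem_cons] at hD
        rcases hD with rfl | hD
        · exact h0
        · exact hup D hD
      · cases w with
        | nil =>
          right
          intro D hD
          rw [Walk.darts_cons, List.mem_cons] at hD
          rcases hD with rfl | hD
          · exact h0
          · simp at hD
        | @cons z x' x hadj' w' =>
          exfalso
          have h1 := hup _ (show _ ∈ (Walk.cons hadj' w').darts from by
            rw [Walk.darts_cons]; exact List.mem_cons_self)
          rw [StepDown] at h0
          rw [StepUp] at h1
          have hx'y : x' = y :=
            fin_eq_of_zmod (by omega) hadj'.2.2.1 hadj.2.1 (by rw [h1, ← h0])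
          subst hx'y
          apply hne
          rw [Walk.edges_cons]
          exact List.mem_cons.mpr (Or.inl Sym2.eq_swap)
    · rcases step_up_or_down ⟨(y, z), hadj⟩ with h0 | h0
      · cases w with
        | nil =>
          left
          intro D hD
          rw [Walk.darts_cons, List.mem_cons] at hD
          rcases hD with rfl | hD
          · exact h0
          · simp at hD
        | @cons z x' x hadj' w' =>
          exfalso
          have h1 := hdown _ (show _ ∈ (Walk.cons hadj' w').darts from by
            rw [Walk.darts_cons]; exact List.mem_cons_self)
          rw [StepUp] at h0
          rw [StepDown] at h1
          have hx'y : x' = y := by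
            refine fin_eq_of_zmod (by omega) hadj'.2.2.1 hadj.2.1 ?_
            have : ((x'.val : ZMod g)) + 1 = (y.val : ZMod g) + 1 := by rw [← h1, h0]
            exact add_right_cancel this
          subst hx'y
          apply hne
          rw [Walk.edges_cons]
          exact List.mem_cons.mpr (Or.inl Sym2.eq_swap)
      · right
        intro D hD
        rw [Walk.darts_cons, List.mem_cons] at hD
        rcases hD with rfl | hD
        · exact h0
        · exact hdown D hD

private lemma telescope_up :
    ∀ {y x : Fin n} (w : (baseGraph n g).Walk y x), (∀ D ∈ w.darts, StepUp g D) →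
      ((x.val : ZMod g)) = (y.val : ZMod g) + w.length := by
  intro y x w
  induction w with
  | nil => intro _; simp
  | @cons y z x hadj w ih =>
    intro h
    have h0 : StepUp g ⟨(y, z), hadj⟩ := h _ (by rw [Walk.darts_cons]; exact List.mem_cons_self)
    have htail : ∀ D ∈ w.darts, StepUp g D := fun D hD =>
      h D (by rw [Walk.darts_cons]; exact List.mem_cons_of_mem _ hD)
    rw [StepUp] at h0
    have := ih htail
    rw [Walk.length_cons]
    push_cast
    rw [this, h0]
    ring

private lemma telescope_down :
    ∀ {y x : Fin n} (w : (baseGraph n g).Walk y x), (∀ D ∈ w.darts, StepDown g D) →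
      ((y.val : ZMod g)) = (x.val : ZMod g) + w.length := by
  intro y x w
  induction w with
  | nil => intro _; simp
  | @cons y z x hadj w ih =>
    intro h
    have h0 : StepDown g ⟨(y, z), hadj⟩ :=
      h _ (by rw [Walk.darts_cons]; exact List.mem_cons_self)
    have htail : ∀ D ∈ w.darts, StepDown g D := fun D hD =>
      h D (by rw [Walk.darts_cons]; exact List.mem_cons_of_mem _ hD)
    rw [StepDown] at h0
    have := ih htail
    rw [Walk.length_cons]
    push_cast
    rw [h0, this]
    ring

/-- All cycles of the base graph have length at least `g` (in fact exactly `g`). -/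
lemma baseGraph_cycles (hg : 3 ≤ g) :
    ∀ (u : Fin n) (c : (baseGraph n g).Walk u u), c.IsCycle → g ≤ c.length := by
  intro u c hc
  have h3 := hc.three_le_length
  have hdvd : (c.length : ZMod g) = 0 := by
    rcases steps_uniform hg c hc.isTrail with h | h
    · have := telescope_up c h
      have h2 : ((u.val : ZMod g)) + (c.length : ZMod g) = ((u.val : ZMod g)) + 0 := by
        rw [← this, add_zero]
      exact add_left_cancel h2
    · have := telescope_down c h
      have h2 : ((u.val : ZMod g)) + (c.length : ZMod g) = ((u.val : ZMod g)) + 0 := by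
        rw [← this, add_zero]
      exact add_left_cancel h2
  have : (g : ℕ) ∣ c.length := by
    haveI : NeZero g := ⟨by omega⟩
    exact (ZMod.natCast_eq_zero_iff _ _).mp hdvd
  rcases this with ⟨k, hk⟩
  rcases Nat.eq_zero_or_pos k with rfl | hkpos
  · omega
  · calc g = g * 1 := by ring
    _ ≤ g * k := Nat.mul_le_mul_left _ hkpos
    _ = c.length := hk.symm

/-- Degrees in the base graph are at most 2. -/
lemma baseGraph_ncard_le (hg : 3 ≤ g) (hgn : g ≤ n) (a : Fin n) :
    ((baseGraph n g).neighborSet a).ncard ≤ 2 := by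
  have hgpos : 0 < g := by omega
  by_cases ha : a.val < g
  · set p : Fin n := ⟨(a.val + 1) % g, lt_of_lt_of_le (Nat.mod_lt _ hgpos) hgn⟩ with hp
    set q : Fin n := ⟨(a.val + (g - 1)) % g, lt_of_lt_of_le (Nat.mod_lt _ hgpos) hgn⟩ with hq
    have hsub : (baseGraph n g).neighborSet a ⊆ {p, q} := by
      intro b hb
      obtain ⟨-, -, hbg, h | h⟩ := hb
      · left
        exact Fin.ext (by rw [hp]; exact h.symm)
      · right
        refine Fin.ext ?_
        rw [hq]
        show b.val = (a.val + (g - 1)) % g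
        rw [← h, Nat.mod_add_mod]
        have : b.val + 1 + (g - 1) = b.val + g := by omega
        rw [this, Nat.add_mod_right, Nat.mod_eq_of_lt hbg]
    calc ((baseGraph n g).neighborSet a).ncard ≤ ({p, q} : Set (Fin n)).ncard :=
          Set.ncard_le_ncard hsub (Set.toFinite _)
    _ ≤ 2 := by
          refine le_trans (Set.ncard_insert_le _ _) ?_
          simp
  · have : (baseGraph n g).neighborSet a = ∅ := by
      ext b
      simp only [mem_neighborSet, Set.mem_empty_iff_false, iff_false]
      rintro ⟨-, h, -⟩
      exact ha h
    simp [this]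

/-- The canonical walk going down the cycle from `g - 1 - j` to `0`. -/
def downWalk (hg : 3 ≤ g) (hgn : g ≤ n) :
    (j : ℕ) → j ≤ g - 2 → (baseGraph n g).Walk ⟨g - 1 - j, by omega⟩ ⟨0, by omega⟩
  | 0, _ => Walk.cons
      (show (baseGraph n g).Adj ⟨g - 1 - 0, by omega⟩ ⟨0, by omega⟩ from
        ⟨by simp [Fin.ext_iff]; omega, by simp; omega, by simp; omega,
          Or.inl (by show (g - 1 - 0 + 1) % g = 0
                     have h' : g - 1 - 0 + 1 = g := by omega
                     rw [h', Nat.mod_self])⟩) Walk.nil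
  | (j+1), hj => Walk.cons
      (show (baseGraph n g).Adj ⟨g - 1 - (j+1), by omega⟩ ⟨g - 1 - j, by omega⟩ from
        ⟨by simp [Fin.ext_iff]; omega, by simp; omega, by simp; omega,
          Or.inl (by show (g - 1 - (j+1) + 1) % g = g - 1 - j
                     rw [Nat.mod_eq_of_lt (by omega)]; omega)⟩)
      (downWalk hg hgn j (by omega))

lemma downWalk_length (hg : 3 ≤ g) (hgn : g ≤ n) :
    ∀ (j : ℕ) (hj : j ≤ g - 2), (downWalk hg hgn j hj).length = j + 1 := by
  intro j
  induction j with
  | zero => intro hj; simp [downWalk]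
  | succ j ih => intro hj; rw [downWalk, Walk.length_cons, ih (by omega)]

lemma downWalk_support (hg : 3 ≤ g) (hgn : g ≤ n) :
    ∀ (j : ℕ) (hj : j ≤ g - 2) (x : Fin n), x ∈ (downWalk hg hgn j hj).support →
      x = ⟨0, by omega⟩ ∨ (g - 1 - j ≤ x.val ∧ x.val ≤ g - 1) := by
  intro j
  induction j with
  | zero =>
    intro hj x hx
    rw [downWalk] at hx
    simp only [Walk.support_cons, Walk.support_nil, List.mem_cons] at hx
    rcases hx with rfl | hx
    · right; constructor <;> simp
    · left; simpa using hx
  | succ j ih =>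
    intro hj x hx
    rw [downWalk] at hx
    rw [Walk.support_cons, List.mem_cons] at hx
    rcases hx with rfl | hx
    · right
      exact ⟨by simp, by simp⟩
    · rcases ih (by omega) x hx with h | h
      · exact Or.inl h
      · right; omega

lemma downWalk_isPath (hg : 3 ≤ g) (hgn : g ≤ n) :
    ∀ (j : ℕ) (hj : j ≤ g - 2), (downWalk hg hgn j hj).IsPath := by
  intro j
  induction j with
  | zero =>
    intro hj
    rw [downWalk]
    simp [Walk.cons_isPath_iff, Fin.ext_iff]
    omega
  | succ j ih =>
    intro hj
    rw [downWalk]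
    rw [Walk.cons_isPath_iff]
    refine ⟨ih (by omega), ?_⟩
    intro hmem
    rcases downWalk_support hg hgn j (by omega) _ hmem with h | h
    · rw [Fin.ext_iff] at h
      simp at h
      omega
    · have h' : g - 1 - j ≤ g - 1 - (j + 1) := by simpa using h.1
      omega

lemma downWalk_edge01 (hg : 3 ≤ g) (hgn : g ≤ n) :
    ∀ (j : ℕ) (hj : j ≤ g - 2),
      s((⟨0, by omega⟩ : Fin n), (⟨1, by omega⟩ : Fin n)) ∉ (downWalk hg hgn j hj).edges := by
  intro j
  induction j with
  | zero =>
    intro hj hmem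
    rw [downWalk] at hmem
    simp only [Walk.edges_cons, Walk.edges_nil, List.mem_cons, List.not_mem_nil, or_false] at hmem
    rw [Sym2.eq_iff] at hmem
    rcases hmem with ⟨h1, -⟩ | ⟨-, h2⟩
    · rw [Fin.ext_iff] at h1; simp at h1; omega
    · rw [Fin.ext_iff] at h2; simp at h2; omega
  | succ j ih =>
    intro hj hmem
    rw [downWalk, Walk.edges_cons, List.mem_cons] at hmem
    rcases hmem with h | h
    · rw [Sym2.eq_iff] at h
      rcases h with ⟨h1, -⟩ | ⟨h2, -⟩
      · rw [Fin.ext_iff] at h1; simp at h1; omega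
      · rw [Fin.ext_iff] at h2; simp at h2; omega
    · exact ih (by omega) h

/-- The base graph contains a cycle of length exactly `g`. -/
lemma baseGraph_cycle_exists (hg : 3 ≤ g) (hgn : g ≤ n) :
    ∃ (u : Fin n) (c : (baseGraph n g).Walk u u), c.IsCycle ∧ c.length = g := by
  have h1 : (⟨g - 1 - (g - 2), by omega⟩ : Fin n) = ⟨1, by omega⟩ := Fin.ext (by simp; omega)
  have hadj : (baseGraph n g).Adj ⟨0, by omega⟩ ⟨1, by omega⟩ := by
    refine ⟨by simp [Fin.ext_iff], by simp; omega, by simp; omega, Or.inl ?_⟩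
    show (0 + 1) % g = 1
    rw [Nat.mod_eq_of_lt (by omega)]
  refine ⟨⟨0, by omega⟩,
    Walk.cons hadj ((downWalk hg hgn (g - 2) le_rfl).copy h1 rfl), ?_, ?_⟩
  · rw [Walk.cons_isCycle_iff]
    constructor
    · rw [Walk.isPath_copy]
      exact downWalk_isPath hg hgn _ _
    · rw [Walk.edges_copy]
      exact downWalk_edge01 hg hgn _ _
  · rw [Walk.length_cons, Walk.length_copy, downWalk_length]
    omega

end base

section book


variable {V : Type*} [Fintype V] [DecidableEq V]

/-- Number of neighbours, instance-free. -/
noncomputable def dgr (G : SimpleGraph V) (v : V) : ℕ := (G.neighborSet v).ncard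

/-- Number of edges, instance-free. -/
noncomputable def ecnt (G : SimpleGraph V) : ℕ := G.edgeSet.ncard

lemma addEdge_adj (H : SimpleGraph V) {a b : V} (hab : a ≠ b) (p q : V) :
    (H ⊔ fromEdgeSet {s(a, b)}).Adj p q ↔ H.Adj p q ∨ s(p, q) = s(a, b) := by
  rw [sup_adj, fromEdgeSet_adj, Set.mem_singleton_iff]
  constructor
  · rintro (h | ⟨h, -⟩)
    · exact Or.inl h
    · exact Or.inr h
  · rintro (h | h)
    · exact Or.inl h
    · refine Or.inr ⟨h, ?_⟩
      intro hpq
      rw [hpq, Sym2.eq_iff] at h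
      rcases h with ⟨rfl, rfl⟩ | ⟨rfl, rfl⟩
      · exact hab rfl
      · exact hab rfl

lemma addEdge_edgeSet (H : SimpleGraph V) {a b : V} (hab : a ≠ b) :
    (H ⊔ fromEdgeSet {s(a, b)}).edgeSet = insert s(a, b) H.edgeSet := by
  rw [edgeSet_sup, edgeSet_fromEdgeSet]
  ext e
  simp only [Set.mem_union, Set.mem_diff, Set.mem_singleton_iff, Set.mem_insert_iff,
    Set.mem_setOf_eq]
  constructor
  · rintro (h | ⟨rfl, -⟩)
    · exact Or.inr h
    · exact Or.inl rfl
  · rintro (rfl | h)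
    · exact Or.inr ⟨rfl, by rw [Sym2.mem_diagSet, Sym2.mk_isDiag_iff]; exact hab⟩
    · exact Or.inl h

lemma ecnt_addEdge (H : SimpleGraph V) {a b : V} (hab : a ≠ b) (hnadj : ¬ H.Adj a b) :
    ecnt (H ⊔ fromEdgeSet {s(a, b)}) = ecnt H + 1 := by
  rw [ecnt, ecnt, addEdge_edgeSet H hab,
    Set.ncard_insert_of_notMem (by rwa [mem_edgeSet] at *) (Set.toFinite _)]

lemma ecnt_deleteEdge (G : SimpleGraph V) {x y : V} (hxy : G.Adj x y) :
    ecnt (G.deleteEdges {s(x, y)}) + 1 = ecnt G := by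
  rw [ecnt, ecnt, edgeSet_deleteEdges]
  have : G.edgeSet \ {s(x, y)} = G.edgeSet \ {s(x, y)} := rfl
  rw [show (({s(x, y)} : Set (Sym2 V))) = ({s(x, y)} : Set (Sym2 V)) from rfl]
  have hmem : s(x, y) ∈ G.edgeSet := by rwa [mem_edgeSet]
  rw [Set.ncard_diff_singleton_of_mem hmem]
  have hpos : 1 ≤ G.edgeSet.ncard := by
    rw [Nat.one_le_iff_ne_zero]
    intro h0
    rw [Set.ncard_eq_zero (Set.toFinite _)] at h0
    rw [Set.eq_empty_iff_forall_notMem] at h0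
    exact h0 _ hmem
  omega

lemma dgr_le_of_subset {G : SimpleGraph V} {v : V} {s : Set V}
    (h : G.neighborSet v ⊆ s) : dgr G v ≤ s.ncard :=
  Set.ncard_le_ncard h (Set.toFinite _)

section surgery

variable {G : SimpleGraph V} {g d : ℕ}

private lemma enat_peel {A : ℕ∞} {k : ℕ} (h : (k : ℕ∞) + 1 ≤ A + 1) : (k : ℕ∞) ≤ A := by
  by_contra hlt
  push_neg at hlt
  have := WithTop.add_lt_add_right (show (1 : ℕ∞) ≠ ⊤ by simp) hlt
  exact absurd h (not_le.mpr this)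

private lemma ne_of_edist_ge {u x : V} (h : (2 : ℕ∞) ≤ G.edist u x) : u ≠ x := by
  rintro rfl
  rw [SimpleGraph.edist_self] at h
  simp at h

private lemma not_adj_of_edist_ge {u x : V} (h : (2 : ℕ∞) ≤ G.edist u x) : ¬ G.Adj u x := by
  intro hadj
  rw [← SimpleGraph.edist_eq_one_iff_adj] at hadj
  rw [hadj] at h
  norm_num at h

end surgery
end book
end ES

section surgery2
variable {V : Type*} [Fintype V] [DecidableEq V] {G : SimpleGraph V} {g d : ℕ}

/-- Adding an edge between far-apart vertices: cycles stay long, edge count goes up,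
degrees change in a controlled way. -/
lemma augment_good (hg : 3 ≤ g)
    (hcyc : ∀ w (c : G.Walk w w), c.IsCycle → g ≤ c.length)
    {u x : V} (hfar : (g : ℕ∞) + 2 ≤ G.edist u x) :
    (∀ w (c : (G ⊔ fromEdgeSet {s(u, x)}).Walk w w), c.IsCycle → g ≤ c.length)
    ∧ ecnt (G ⊔ fromEdgeSet {s(u, x)}) = ecnt G + 1
    ∧ (∀ w, dgr (G ⊔ fromEdgeSet {s(u, x)}) w ≤ dgr G w + 1)
    ∧ (∀ w, w ≠ u → w ≠ x → dgr (G ⊔ fromEdgeSet {s(u, x)}) w ≤ dgr G w) := by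
  have h2 : (2 : ℕ∞) ≤ G.edist u x := le_trans (le_add_self) hfar
  have hne := ne_of_edist_ge h2
  have hnadj := not_adj_of_edist_ge h2
  have hsub : ∀ w, (G ⊔ fromEdgeSet {s(u, x)}).neighborSet w ⊆
      G.neighborSet w ∪ {z | s(w, z) = s(u, x)} := by
    intro w z hz
    rw [mem_neighborSet, addEdge_adj G hne] at hz
    rcases hz with h | h
    · exact Or.inl h
    · exact Or.inr h
  refine ⟨?_, ecnt_addEdge G hne hnadj, ?_, ?_⟩
  · refine cycles_addEdge g hcyc ?_
    calc (g : ℕ∞) ≤ (g : ℕ∞) + 2 := le_self_add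
    _ ≤ G.edist u x := hfar
    _ ≤ G.edist u x + 1 := le_self_add
  · intro w
    refine le_trans (dgr_le_of_subset (hsub w)) ?_
    refine le_trans (Set.ncard_union_le _ _) ?_
    have h1 : {z | s(w, z) = s(u, x)}.ncard ≤ 1 := by
      have hss : {z | s(w, z) = s(u, x)} ⊆ (if w = u then {x} else {u} : Set V) := by
        intro z hz
        rw [Set.mem_setOf_eq, Sym2.eq_iff] at hz
        rcases hz with ⟨rfl, rfl⟩ | ⟨rfl, rfl⟩
        · simp
        · simp [Ne.symm hne]
      refine le_trans (Set.ncard_le_ncard hss (Set.toFinite _)) ?_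
      split_ifs <;> simp
    rw [dgr]
    omega
  · intro w hwu hwx
    have hsub2 : (G ⊔ fromEdgeSet {s(u, x)}).neighborSet w ⊆ G.neighborSet w := by
      intro z hz
      rcases hsub w hz with h | h
      · exact h
      · rw [Set.mem_setOf_eq, Sym2.eq_iff] at h
        rcases h with ⟨rfl, rfl⟩ | ⟨rfl, rfl⟩
        · exact absurd rfl hwu
        · exact absurd rfl hwx
    exact dgr_le_of_subset hsub2
end surgery2

section surgery3
variable {V : Type*} [Fintype V] [DecidableEq V] {G : SimpleGraph V} {g d : ℕ}

private lemma pairset_eq (w : V) {a b : V} (hab : a ≠ b) :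
    {z | s(w, z) = s(a, b)} = (if w = a then {b} else if w = b then {a} else ∅ : Set V) := by
  ext z
  rw [Set.mem_setOf_eq, Sym2.eq_iff]
  split_ifs with h1 h2
  · subst h1
    simp [hab]
  · subst h2
    simp [Ne.symm hab]
  · simp [h1, h2]

/-- The Erdős–Sachs surgery: delete a far-away edge `xy`, add edges `ux` and `vy`. -/
lemma surgery_good (hg : 3 ≤ g)
    (hcyc : ∀ w (c : G.Walk w w), c.IsCycle → g ≤ c.length)
    {u v x y : V} (hxy : G.Adj x y)
    (hfux : (g : ℕ∞) + 2 ≤ G.edist u x) (hfvx : (g : ℕ∞) + 2 ≤ G.edist v x) :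
    (∀ w (c : (((G.deleteEdges {s(x, y)}) ⊔ fromEdgeSet {s(u, x)}) ⊔ fromEdgeSet {s(v, y)}).Walk w w),
        c.IsCycle → g ≤ c.length)
    ∧ ecnt (((G.deleteEdges {s(x, y)}) ⊔ fromEdgeSet {s(u, x)}) ⊔ fromEdgeSet {s(v, y)}) = ecnt G + 1
    ∧ (∀ w, w ≠ u → w ≠ v →
        dgr (((G.deleteEdges {s(x, y)}) ⊔ fromEdgeSet {s(u, x)}) ⊔ fromEdgeSet {s(v, y)}) w ≤ dgr G w)
    ∧ (u ≠ v →
        dgr (((G.deleteEdges {s(x, y)}) ⊔ fromEdgeSet {s(u, x)}) ⊔ fromEdgeSet {s(v, y)}) u ≤ dgr G u + 1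
        ∧ dgr (((G.deleteEdges {s(x, y)}) ⊔ fromEdgeSet {s(u, x)}) ⊔ fromEdgeSet {s(v, y)}) v ≤ dgr G v + 1)
    ∧ (u = v →
        dgr (((G.deleteEdges {s(x, y)}) ⊔ fromEdgeSet {s(u, x)}) ⊔ fromEdgeSet {s(v, y)}) u ≤ dgr G u + 2) := by
  set H := G.deleteEdges {s(x, y)} with hH
  set G1 := H ⊔ fromEdgeSet {s(u, x)} with hG1
  set G2 := G1 ⊔ fromEdgeSet {s(v, y)} with hG2
  have hxyne : x ≠ y := hxy.ne
  have hcast2 : ((2 : ℕ) : ℕ∞) = (2 : ℕ∞) := by norm_num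
  have h2ux : (2 : ℕ∞) ≤ G.edist u x := le_trans le_add_self hfux
  have h2vx : (2 : ℕ∞) ≤ G.edist v x := le_trans le_add_self hfvx
  have huxne : u ≠ x := ne_of_edist_ge h2ux
  have hvxne : v ≠ x := ne_of_edist_ge h2vx
  have hnadj_ux : ¬ G.Adj u x := not_adj_of_edist_ge h2ux
  have hedyx : G.edist y x = 1 := SimpleGraph.edist_eq_one_iff_adj.mpr hxy.symm
  have hfuy : (g : ℕ∞) + 1 ≤ G.edist u y := by
    refine enat_peel ?_
    calc (g : ℕ∞) + 1 + 1 = (g : ℕ∞) + 2 := by ring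
    _ ≤ G.edist u x := hfux
    _ ≤ G.edist u y + G.edist y x := SimpleGraph.edist_triangle
    _ = G.edist u y + 1 := by rw [hedyx]
  have hfvy : (g : ℕ∞) + 1 ≤ G.edist v y := by
    refine enat_peel ?_
    calc (g : ℕ∞) + 1 + 1 = (g : ℕ∞) + 2 := by ring
    _ ≤ G.edist v x := hfvx
    _ ≤ G.edist v y + G.edist y x := SimpleGraph.edist_triangle
    _ = G.edist v y + 1 := by rw [hedyx]
  have hg2 : (2 : ℕ∞) ≤ (g : ℕ∞) := by
    rw [← hcast2]
    exact Nat.cast_le.mpr (by omega)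
  have h2uy : (2 : ℕ∞) ≤ G.edist u y := le_trans hg2 (le_trans le_self_add hfuy)
  have h2vy : (2 : ℕ∞) ≤ G.edist v y := le_trans hg2 (le_trans le_self_add hfvy)
  have huyne : u ≠ y := ne_of_edist_ge h2uy
  have hvyne : v ≠ y := ne_of_edist_ge h2vy
  have hnadj_vy : ¬ G.Adj v y := not_adj_of_edist_ge h2vy
  have hHle : H ≤ G := deleteEdges_le _
  -- cycles of H are long
  have hHcyc : ∀ w (c : H.Walk w w), c.IsCycle → g ≤ c.length := by
    intro w c hc
    have := hcyc w (Walk.mapLe hHle c) ((Walk.mapLe_isCycle hHle).mpr hc)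
    simpa [Walk.mapLe] using this
  -- distances in H
  have hHux : (g : ℕ∞) + 2 ≤ H.edist u x := le_trans hfux (SimpleGraph.edist_anti hHle)
  have hHvx : (g : ℕ∞) + 2 ≤ H.edist v x := le_trans hfvx (SimpleGraph.edist_anti hHle)
  have hHvy : (g : ℕ∞) + 1 ≤ H.edist v y := le_trans hfvy (SimpleGraph.edist_anti hHle)
  have hHxy : (g : ℕ∞) ≤ H.edist x y + 1 := edist_deleteEdge_ge hxy g hcyc
  -- cycles of G1 are long
  have hG1cyc : ∀ w (c : G1.Walk w w), c.IsCycle → g ≤ c.length := by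
    refine cycles_addEdge g hHcyc ?_
    calc (g : ℕ∞) ≤ (g : ℕ∞) + 2 := le_self_add
    _ ≤ H.edist u x := hHux
    _ ≤ H.edist u x + 1 := le_self_add
  -- distance from v to y in G1 is at least g
  have hG1vy : (g : ℕ∞) ≤ G1.edist v y := by
    refine le_trans (le_min ?_ (le_min ?_ ?_)) edist_addEdge_ge
    · exact le_trans le_self_add hHvy
    · calc (g : ℕ∞) ≤ H.edist x y + 1 := hHxy
      _ = 1 + H.edist x y := by rw [add_comm]
      _ ≤ (H.edist v u + 1) + H.edist x y := by
          exact add_le_add_left (le_add_self) _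
    · calc (g : ℕ∞) ≤ (g : ℕ∞) + 2 := le_self_add
      _ ≤ H.edist v x := hHvx
      _ ≤ H.edist v x + 1 + H.edist u y := le_trans le_self_add le_self_add
  -- cycles of G2 are long
  have hG2cyc : ∀ w (c : G2.Walk w w), c.IsCycle → g ≤ c.length := by
    refine cycles_addEdge g hG1cyc ?_
    exact le_trans hG1vy le_self_add
  -- not-adjacency facts needed for edge counts
  have hnadj_Hux : ¬ H.Adj u x := fun h => hnadj_ux (hHle h)
  have hnadj_G1vy : ¬ G1.Adj v y := by
    rw [hG1, addEdge_adj H huxne]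
    rintro (h | h)
    · exact hnadj_vy (hHle h)
    · rw [Sym2.eq_iff] at h
      rcases h with ⟨h1, h2⟩ | ⟨h1, h2⟩
      · exact hxyne h2.symm
      · exact hvxne h1
  have hec : ecnt G2 = ecnt G + 1 := by
    rw [hG2, ecnt_addEdge G1 hvyne hnadj_G1vy, hG1, ecnt_addEdge H huxne hnadj_Hux]
    have := ecnt_deleteEdge G hxy
    rw [← hH] at this
    omega
  -- neighbourhood inclusion
  have hG2adj : ∀ p q : V, G2.Adj p q ↔
      (G.Adj p q ∧ s(p, q) ≠ s(x, y)) ∨ s(p, q) = s(u, x) ∨ s(p, q) = s(v, y) := by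
    intro p q
    rw [hG2, addEdge_adj G1 hvyne, hG1, addEdge_adj H huxne, hH, deleteEdges_adj,
      Set.mem_singleton_iff, or_assoc]
  have hsub : ∀ w : V, G2.neighborSet w ⊆
      ((G.neighborSet w \ {z | s(w, z) = s(x, y)}) ∪ {z | s(w, z) = s(u, x)})
        ∪ {z | s(w, z) = s(v, y)} := by
    intro w z hz
    rw [mem_neighborSet, hG2adj] at hz
    rcases hz with ⟨h1, h2⟩ | h | h
    · exact Or.inl (Or.inl ⟨h1, h2⟩)
    · exact Or.inl (Or.inr h)
    · exact Or.inr h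
  have hbound : ∀ w : V, dgr G2 w ≤
      (G.neighborSet w \ {z | s(w, z) = s(x, y)}).ncard
        + {z | s(w, z) = s(u, x)}.ncard + {z | s(w, z) = s(v, y)}.ncard := by
    intro w
    refine le_trans (dgr_le_of_subset (hsub w)) ?_
    refine le_trans (Set.ncard_union_le _ _) ?_
    exact add_le_add_left (Set.ncard_union_le _ _) _
  refine ⟨hG2cyc, hec, ?_, ?_, ?_⟩
  · -- w ∉ {u, v}
    intro w hwu hwv
    by_cases hwx : w = x
    · subst hwx
      refine le_trans (hbound w) ?_
      rw [pairset_eq w hxyne, if_pos rfl, pairset_eq w huxne, if_neg (Ne.symm huxne), if_pos rfl,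
        pairset_eq w hvyne, if_neg (Ne.symm hvxne), if_neg hxyne]
      have hmem : y ∈ G.neighborSet w := hxy
      rw [Set.ncard_diff_singleton_of_mem hmem]
      have hpos : 1 ≤ (G.neighborSet w).ncard :=
        Nat.one_le_iff_ne_zero.mpr (by
        intro h0
        rw [Set.ncard_eq_zero (Set.toFinite _)] at h0
        exact absurd (h0 ▸ hmem) (Set.notMem_empty y))
      rw [dgr]
      simp only [Set.ncard_singleton, Set.ncard_empty]
      omega
    · by_cases hwy : w = y
      · subst hwy
        refine le_trans (hbound w) ?_
        rw [pairset_eq w hxyne, if_neg hwx, if_pos rfl, pairset_eq w huxne,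
          if_neg (Ne.symm huyne), if_neg hwx, pairset_eq w hvyne, if_neg (Ne.symm hvyne), if_pos rfl]
        have hmem : x ∈ G.neighborSet w := hxy.symm
        rw [Set.ncard_diff_singleton_of_mem hmem]
        have hpos : 1 ≤ (G.neighborSet w).ncard :=
          Nat.one_le_iff_ne_zero.mpr (by
          intro h0
          rw [Set.ncard_eq_zero (Set.toFinite _)] at h0
          exact absurd (h0 ▸ hmem) (Set.notMem_empty x))
        rw [dgr]
        simp only [Set.ncard_singleton, Set.ncard_empty]
        omega
      · refine le_trans (hbound w) ?_
        rw [pairset_eq w hxyne, if_neg hwx, if_neg hwy, pairset_eq w huxne, if_neg hwu,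
          if_neg hwx, pairset_eq w hvyne, if_neg hwv, if_neg hwy]
        simp only [Set.ncard_empty, add_zero]
        exact le_trans (Set.ncard_le_ncard Set.diff_subset (Set.toFinite _)) le_rfl
  · -- u ≠ v : degrees of u and v go up by at most 1
    intro huv
    constructor
    · refine le_trans (hbound u) ?_
      rw [pairset_eq u hxyne, if_neg huxne, if_neg huyne, pairset_eq u huxne, if_pos rfl,
        pairset_eq u hvyne, if_neg huv, if_neg huyne]
      simp only [Set.ncard_singleton, Set.ncard_empty, Set.diff_empty, add_zero]
      exact add_le_add_left (le_rfl) _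
    · refine le_trans (hbound v) ?_
      rw [pairset_eq v hxyne, if_neg hvxne, if_neg hvyne, pairset_eq v huxne,
        if_neg (Ne.symm huv), if_neg hvxne, pairset_eq v hvyne, if_pos rfl]
      simp only [Set.ncard_singleton, Set.ncard_empty, Set.diff_empty, add_zero, dgr]
      omega
  · -- u = v : degree of u goes up by at most 2
    rintro rfl
    refine le_trans (hbound u) ?_
    rw [pairset_eq u hxyne, if_neg huxne, if_neg huyne, pairset_eq u huxne, if_pos rfl,
      pairset_eq u hvyne, if_pos rfl]
    simp only [Set.ncard_singleton, Set.ncard_empty, Set.diff_empty, dgr]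
    omega
end surgery3

private def GoodG {n : ℕ} (d g : ℕ) (G : SimpleGraph (Fin n)) : Prop :=
  (∀ w, dgr G w ≤ d) ∧ (∀ w (c : G.Walk w w), c.IsCycle → g ≤ c.length)
    ∧ (∃ w, ∃ c : G.Walk w w, c.IsCycle ∧ c.length = g)

/-- Erdős–Sachs: for all `d ≥ 2` and `g ≥ 3` there exists a `d`-regular
(finite simple) graph with girth exactly `g`. -/
theorem stmt_14 (d g : ℕ) (hd : 2 ≤ d) (hg : 3 ≤ g) :
    ∃ (n : ℕ) (G : SimpleGraph (Fin n)) (_ : DecidableRel G.Adj),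
      G.IsRegularOfDegree d ∧ G.girth = g := by
  classical
  set M : ℕ := (d + 1) ^ (g + 2) + g + 2 with hM
  set n : ℕ := 2 * M with hn
  have hpow1 : 1 ≤ (d + 1) ^ (g + 2) := Nat.one_le_pow _ _ (by omega)
  have hgn : g ≤ n := by omega
  -- the family of good graphs
  have hbase : GoodG d g (baseGraph n g) := by
    refine ⟨fun w => le_trans (baseGraph_ncard_le hg hgn w) hd, baseGraph_cycles hg, ?_⟩
    obtain ⟨u, c, hc, hl⟩ := baseGraph_cycle_exists hg hgn
    exact ⟨u, c, hc, hl⟩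
  set S : Set ℕ := {m | ∃ G : SimpleGraph (Fin n), GoodG d g G ∧ ecnt G = m} with hS
  have hSne : S.Nonempty := ⟨ecnt (baseGraph n g), ⟨baseGraph n g, hbase, rfl⟩⟩
  have hSbdd : BddAbove S := by
    refine ⟨Nat.card (Sym2 (Fin n)), ?_⟩
    rintro m ⟨G, -, rfl⟩
    calc ecnt G ≤ (Set.univ : Set (Sym2 (Fin n))).ncard :=
          Set.ncard_le_ncard (Set.subset_univ _) (Set.toFinite _)
    _ = Nat.card (Sym2 (Fin n)) := Set.ncard_univ _
  obtain ⟨G, hPG, hecG⟩ : sSup S ∈ S := Nat.sSup_mem hSne hSbdd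
  have hmax : ∀ G' : SimpleGraph (Fin n), GoodG d g G' → ecnt G' ≤ sSup S := by
    intro G' h
    exact le_csSup hSbdd ⟨G', h, rfl⟩
  obtain ⟨hdeg, hcyc, w₀, c₀, hc₀, hlen₀⟩ := hPG
  -- degree bridging
  letI : DecidableRel G.Adj := Classical.decRel _
  have hdgr_deg : ∀ w, dgr G w = G.degree w := by
    intro w
    rw [dgr, SimpleGraph.degree, neighborFinset_def, Set.ncard_eq_toFinset_card']
  have hdeg' : ∀ w, G.degree w ≤ d := fun w => (hdgr_deg w) ▸ hdeg w
  -- the extremal graph is d-regular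
  have hreg : ∀ w, dgr G w = d := by
    by_contra hnreg
    push_neg at hnreg
    obtain ⟨u, hu⟩ := hnreg
    have hu' : dgr G u + 1 ≤ d := by
      have := hdeg u
      omega
    -- find a second deficient vertex (possibly u itself)
    have hhs : ∑ w : Fin n, G.degree w = 2 * G.edgeFinset.card :=
      SimpleGraph.sum_degrees_eq_twice_card_edges G
    have hec_fin : ecnt G = G.edgeFinset.card := by
      rw [ecnt, SimpleGraph.edgeFinset, Set.ncard_eq_toFinset_card']
    obtain ⟨v, hv', hvor⟩ : ∃ v, (dgr G v + 1 ≤ d) ∧ (u = v → dgr G u + 2 ≤ d) := by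
      by_cases hex : ∃ v, v ≠ u ∧ dgr G v < d
      · obtain ⟨v, hvu, hv⟩ := hex
        exact ⟨v, by omega, fun h => absurd h.symm hvu⟩
      · push_neg at hex
        refine ⟨u, hu', fun _ => ?_⟩
        have hall : ∀ w, w ≠ u → dgr G w = d := by
          intro w hw
          have h1 := hex w hw
          have h2 := hdeg w
          omega
        have hsum : ∑ w : Fin n, G.degree w = G.degree u + (n - 1) * d := by
          rw [← Finset.add_sum_erase _ _ (Finset.mem_univ u)]
          congr 1
          rw [Finset.sum_congr rfl (fun w hw => ?_), Finset.sum_const, smul_eq_mul,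
            Finset.card_erase_of_mem (Finset.mem_univ u), Finset.card_univ, Fintype.card_fin]
          rw [← hdgr_deg w, hall w (Finset.mem_erase.mp hw).1]
        have e2 : (n - 1) * d + d = n * d := by
          rw [Nat.sub_mul, one_mul]
          have : d ≤ n * d := by
            calc d = 1 * d := (one_mul d).symm
            _ ≤ n * d := Nat.mul_le_mul_right d (by omega)
          omega
        have e3 : n * d = 2 * (M * d) := by rw [hn]; ring
        have e4 := hdgr_deg u
        omega
    -- a far-away vertex x
    have hScard : c₀.support.toFinset.card ≤ g + 2 := by
      calc c₀.support.toFinset.card ≤ c₀.support.length := c₀.support.toFinset_card_le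
      _ = c₀.length + 1 := Walk.length_support _
      _ ≤ g + 2 := by omega
    obtain ⟨x, hxS, hux, hvx⟩ := exists_far_vertex G hdeg' u v c₀.support.toFinset (g + 2)
      (by
        rw [Fintype.card_fin]
        omega)
    have hcast : ∀ z : Fin n, (((g + 2 : ℕ) : ℕ∞) ≤ G.edist z x) → ((g : ℕ∞) + 2 ≤ G.edist z x) := by
      intro z h
      have : ((g + 2 : ℕ) : ℕ∞) = (g : ℕ∞) + 2 := by push_cast; ring
      rwa [this] at h
    have hux' := hcast u hux
    have hvx' := hcast v hvx
    -- x has full degree, else we could add the edge ux directly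
    have hxdeg : dgr G x = d := by
      by_contra hxd
      have hxd' : dgr G x + 1 ≤ d := by
        have := hdeg x
        omega
      obtain ⟨hcyc', hec', hd1, hd2⟩ := augment_good hg hcyc hux'
      have hPG' : GoodG d g (G ⊔ fromEdgeSet {s(u, x)}) := by
        refine ⟨?_, hcyc', ?_⟩
        · intro w
          by_cases hwu : w = u
          · subst hwu
            exact le_trans (hd1 w) (by omega)
          · by_cases hwx : w = x
            · subst hwx
              exact le_trans (hd1 w) (by omega)
            · exact le_trans (hd2 w hwu hwx) (hdeg w)
        · refine ⟨w₀, Walk.mapLe le_sup_left c₀, (Walk.mapLe_isCycle le_sup_left).mpr hc₀, ?_⟩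
          simpa [Walk.mapLe] using hlen₀
      have := hmax _ hPG'
      omega
    -- x has a neighbour y
    have hxne : (G.neighborSet x).Nonempty := by
      rw [← Set.ncard_pos (Set.toFinite _)]
      have h' := hxdeg
      rw [dgr] at h'
      omega
    obtain ⟨y, hy⟩ := hxne
    have hxy : G.Adj x y := hy
    -- perform the surgery
    obtain ⟨hcyc2, hec2, hdw, hduv, hdsame⟩ := surgery_good hg hcyc hxy hux' hvx'
    have hxsupp : x ∉ c₀.support := by
      intro hmem
      exact hxS (List.mem_toFinset.mpr hmem)
    have hxyedge : s(x, y) ∉ c₀.edges := by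
      intro hmem
      exact hxsupp (c₀.fst_mem_support_of_mem_edges hmem)
    have hsubG2 : ∀ e ∈ c₀.edges,
        e ∈ (((G.deleteEdges {s(x, y)}) ⊔ fromEdgeSet {s(u, x)}) ⊔ fromEdgeSet {s(v, y)}).edgeSet := by
      intro e he
      have h1 : e ∈ G.edgeSet := c₀.edges_subset_edgeSet he
      have h2 : e ∈ (G.deleteEdges {s(x, y)}).edgeSet := by
        rw [edgeSet_deleteEdges]
        refine ⟨h1, ?_⟩
        intro hmem2
        rw [Set.mem_singleton_iff] at hmem2
        exact hxyedge (hmem2 ▸ he)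
      have hle : G.deleteEdges {s(x, y)} ≤
          ((G.deleteEdges {s(x, y)}) ⊔ fromEdgeSet {s(u, x)}) ⊔ fromEdgeSet {s(v, y)} :=
        le_trans le_sup_left le_sup_left
      exact SimpleGraph.edgeSet_mono hle h2
    have hPG2 : GoodG d g (((G.deleteEdges {s(x, y)}) ⊔ fromEdgeSet {s(u, x)}) ⊔ fromEdgeSet {s(v, y)}) := by
      refine ⟨?_, hcyc2, ?_⟩
      · intro w
        by_cases hwu : w = u
        · subst hwu
          by_cases hwv : w = v
          · subst hwv
            exact le_trans (hdsame rfl) (hvor rfl)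
          · exact le_trans ((hduv hwv).1) (by omega)
        · by_cases hwv : w = v
          · subst hwv
            rcases eq_or_ne u w with rfl | hne
            · exact le_trans (hdsame rfl) (hvor rfl)
            · exact le_trans ((hduv hne).2) (by omega)
          · exact le_trans (hdw w hwu hwv) (hdeg w)
      · refine ⟨w₀, c₀.transfer _ hsubG2, hc₀.transfer _, ?_⟩
        rw [Walk.length_transfer]
        exact hlen₀
    have := hmax _ hPG2
    omega
  refine ⟨n, G, inferInstance, ?_, ?_⟩
  · intro w
    rw [← hdgr_deg w]
    exact hreg w
  · have hele : G.egirth = (g : ℕ∞) := by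
      apply le_antisymm
      · have h1 : G.egirth ≤ (c₀.length : ℕ∞) := by
          simp only [SimpleGraph.egirth]
          exact iInf_le_of_le w₀ (iInf_le_of_le c₀ (iInf_le _ hc₀))
        rwa [hlen₀] at h1
      · rw [SimpleGraph.le_egirth]
        intro a w hw
        exact Nat.cast_le.mpr (hcyc a w hw)
    rw [SimpleGraph.girth, hele, ENat.toNat_coe]
end

section
/- For every ℓ ≥ 1, every integer k ≥ 1 and every oriented tree T with k edges such that Δ⁺(T) = Δ(T), there exists an oriented graph D with girth at least 2ℓ+1 and minimum semidegree δ⁰(D) = Δ(T) - 1 that does not contain T, provided Δ(T) ≥ 2. In particular, the condition δ⁰(D) ≥ Δ(T) in the main theorem cannot be weakened to δ⁰(D) ≥ Δ(T) - 1. -/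
abbrev SL2 (R : Type*) [CommRing R] := Matrix.SpecialLinearGroup (Fin 2) R

def sA (c : ℤ) : SL2 ℤ := ⟨!![1, 2*c; 0, 1], by simp [Matrix.det_fin_two_of]⟩
def sB (e : ℤ) : SL2 ℤ := ⟨!![1, 0; 2*e, 1], by simp [Matrix.det_fin_two_of]⟩

lemma sA_add (c d : ℤ) : sA (c + d) = sA c * sA d := by
  apply Subtype.ext
  rw [Matrix.SpecialLinearGroup.coe_mul]
  simp [sA, Matrix.SpecialLinearGroup.coe_mul, Matrix.mul_fin_two]
  ring_nf

lemma sB_add (c d : ℤ) : sB (c + d) = sB c * sB d := by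
  apply Subtype.ext
  rw [Matrix.SpecialLinearGroup.coe_mul]
  simp [sB, Matrix.SpecialLinearGroup.coe_mul, Matrix.mul_fin_two]
  ring_nf

@[simp] lemma sA_zero : sA 0 = 1 := by
  apply Subtype.ext
  simp [sA, Matrix.SpecialLinearGroup.coe_one, Matrix.one_fin_two]

@[simp] lemma sB_zero : sB 0 = 1 := by
  apply Subtype.ext
  simp [sB, Matrix.SpecialLinearGroup.coe_one, Matrix.one_fin_two]

def wrd (p : ℤ × ℤ) : SL2 ℤ := sA p.1 * sB p.2 * sA (-p.1)

lemma wrd_mul_inv (a e : ℤ) : wrd (a, e) * wrd (a, -e) = 1 := by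
  simp only [wrd, mul_assoc]
  have h2 : sA (-a) * (sA a * (sB (-e) * sA (-a))) = sB (-e) * sA (-a) := by
    rw [← mul_assoc, ← sA_add]; simp
  rw [h2]
  have h1 : sB e * (sB (-e) * sA (-a)) = sA (-a) := by
    rw [← mul_assoc, ← sB_add]; simp
  rw [h1, ← sA_add]; simp

lemma wrd_inv (a e : ℤ) : wrd (a, -e) = (wrd (a, e))⁻¹ :=
  eq_inv_of_mul_eq_one_left (by simpa using wrd_mul_inv a (-e))

/-- first column of an SL2 ℤ element -/
def fcol (g : SL2 ℤ) : ℤ × ℤ := (g.val 0 0, g.val 1 0)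

lemma fcol_sA_mul (c : ℤ) (g : SL2 ℤ) :
    fcol (sA c * g) = ((fcol g).1 + 2*c*(fcol g).2, (fcol g).2) := by
  unfold fcol; rw [Matrix.SpecialLinearGroup.coe_mul]
  simp [fcol, sA, Matrix.SpecialLinearGroup.coe_mul, Matrix.mul_apply, Fin.sum_univ_succ]

lemma fcol_sB_mul (e : ℤ) (g : SL2 ℤ) :
    fcol (sB e * g) = ((fcol g).1, (fcol g).2 + 2*e*(fcol g).1) := by
  unfold fcol; rw [Matrix.SpecialLinearGroup.coe_mul]
  simp [fcol, sB, Matrix.SpecialLinearGroup.coe_mul, Matrix.mul_apply, Fin.sum_univ_succ]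
  ring

lemma fcol_one : fcol 1 = (1, 0) := by
  simp [fcol, Matrix.SpecialLinearGroup.coe_one]

lemma base_eq (p : ℤ × ℤ) : sA (-p.1) * wrd p = sB p.2 * (sA (-p.1) * 1) := by
  rw [mul_one, wrd, ← mul_assoc, ← mul_assoc, ← sA_add]
  simp [mul_assoc]

lemma step_eq (p q : ℤ × ℤ) (M : SL2 ℤ) :
    sA (-p.1) * (wrd p * M) = sB p.2 * (sA (q.1 - p.1) * (sA (-q.1) * M)) := by
  have h : sA (q.1 - p.1) * sA (-q.1) = sA (-p.1) := by rw [← sA_add]; ring_nf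
  rw [← mul_assoc (sA (q.1-p.1)), h, wrd, ← mul_assoc, ← mul_assoc, ← mul_assoc, ← sA_add]
  simp [mul_assoc]

lemma nl_flip (x y c : ℤ) (h : x^2 < y^2) (hc : 1 ≤ c^2) : y^2 < (x + 2*c*y)^2 := by
  nlinarith [sq_nonneg (c*x + y), mul_nonneg (by linarith : (0:ℤ) ≤ c^2 - 1) (by nlinarith : (0:ℤ) ≤ 2*y^2 - x^2)]


set_option maxHeartbeats 1000000 in
theorem key (D : ℕ) (L : List (ℤ × ℤ)) : ∀ (p : ℤ × ℤ),
    (∀ q ∈ p :: L, 1 ≤ q.1 ∧ q.1 ≤ (D:ℤ) ∧ (q.2 = 1 ∨ q.2 = -1)) →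
    List.Chain' (fun q r => ¬(q.1 = r.1 ∧ r.2 = -q.2)) (p :: L) →
    (fcol (sA (-p.1) * ((p :: L).map wrd).prod)).1 ^ 2
        < (fcol (sA (-p.1) * ((p :: L).map wrd).prod)).2 ^ 2 ∧
    0 ≤ p.2 * (fcol (sA (-p.1) * ((p :: L).map wrd).prod)).1
        * (fcol (sA (-p.1) * ((p :: L).map wrd).prod)).2 ∧
    (fcol (sA (-p.1) * ((p :: L).map wrd).prod)).1 ^ 2 ≤ ((6*(D:ℤ)+5) ^ (L.length+1))^2 ∧
    (fcol (sA (-p.1) * ((p :: L).map wrd).prod)).2 ^ 2 ≤ ((6*(D:ℤ)+5) ^ (L.length+1))^2 := by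
  induction L with
  | nil =>
    intro p hrange _
    obtain ⟨h1, h2, h3⟩ := hrange p (by simp)
    have hD : (1:ℤ) ≤ (D:ℤ) := le_trans h1 h2
    simp only [List.map_cons, List.map_nil, List.prod_cons, List.prod_nil, mul_one,
      List.length_nil, zero_add, pow_one]
    rw [show wrd p = wrd p * 1 by rw [mul_one], ← mul_assoc, mul_one, base_eq p,
      fcol_sB_mul, fcol_sA_mul, fcol_one]
    simp only []
    rcases h3 with h3 | h3 <;> rw [h3] <;> norm_num <;>
      constructor <;> nlinarith [abs_of_nonneg (show (0:ℤ) ≤ 6*(D:ℤ)+5 by positivity)]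
  | cons q L ih =>
    intro p hrange hchain
    have hrq := hrange q (by simp)
    have hrp := hrange p (by simp)
    obtain ⟨ihx, ihs, ihbx, ihby⟩ := ih q (fun r hr => hrange r (List.mem_cons_of_mem p hr))
      (hchain.tail)
    have hhead : ¬(p.1 = q.1 ∧ q.2 = -p.2) := (List.isChain_cons_cons.mp hchain).1
    set x := (fcol (sA (-q.1) * ((q :: L).map wrd).prod)).1 with hx
    set y := (fcol (sA (-q.1) * ((q :: L).map wrd).prod)).2 with hy
    set B : ℤ := (6*(D:ℤ)+5) ^ (L.length+1) with hB
    have hBpos : 0 < B := by positivity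
    have hBsq : 0 ≤ B^2 := sq_nonneg B
    rw [List.map_cons, List.prod_cons, step_eq p q, fcol_sB_mul, fcol_sA_mul]
    simp only [← hx, ← hy, List.length_cons]
    have hexp : ((6*(D:ℤ)+5) ^ (L.length+1+1)) = (6*(D:ℤ)+5) * B := by
      rw [hB, ← pow_succ']
    rw [hexp]
    set c : ℤ := q.1 - p.1 with hc
    have hcb : c^2 ≤ (D:ℤ)^2 := by
      have := hrp.1; have := hrp.2.1; have := hrq.1; have := hrq.2.1; nlinarith
    have hKB : ((6*(D:ℤ)+5) * B)^2 = (36*(D:ℤ)^2 + 60*(D:ℤ) + 25) * B^2 := by ring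
    rw [hKB]
    have hDnn : (0:ℤ) ≤ (D:ℤ) := Int.natCast_nonneg D
    clear_value x y B c
    clear hx hy hB ih hchain hrange
    rcases eq_or_ne c 0 with h0 | h0
    · -- same letter block: p.1 = q.1, so p.2 = q.2
      have hpq1 : p.1 = q.1 := by omega
      have hpq2 : p.2 = q.2 := by
        rcases hrp.2.2 with h | h <;> rcases hrq.2.2 with h' | h' <;>
          first
          | omega
          | (exact absurd ⟨hpq1, by omega⟩ hhead)
      rw [← hpq2] at ihs
      have hxx : x + 2*c*y = x := by rw [h0]; ring
      rw [hxx]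
      have hKBig : (0:ℤ) ≤ (36*(D:ℤ)^2 + 60*(D:ℤ) + 16) * B^2 :=
        mul_nonneg (by positivity) hBsq
      rcases hrp.2.2 with h | h <;> rw [h] <;> rw [h] at ihs
      · refine ⟨by nlinarith, by nlinarith, by nlinarith, ?_⟩
        nlinarith [sq_nonneg (y - x)]
      · refine ⟨by nlinarith, by nlinarith, by nlinarith, ?_⟩
        nlinarith [sq_nonneg (y + x)]
    · have hc1 : (1:ℤ) ≤ c^2 := by
        have h1c : 1 ≤ |c| := Int.one_le_abs h0
        nlinarith [sq_abs c]
      have g1 : y^2 < (x + 2*c*y)^2 := nl_flip x y c ihx hc1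
      have h5 : c^2*y^2 ≤ (D:ℤ)^2 * B^2 := by
        nlinarith [mul_nonneg (sub_nonneg.2 hcb) (sq_nonneg y),
          mul_nonneg (mul_nonneg hDnn hDnn) (sub_nonneg.2 ihby)]
      have hx1b : (x + 2*c*y)^2 ≤ (6*(D:ℤ)^2+3) * B^2 := by
        nlinarith [sq_nonneg (x - c*y)]
      have hDB2 : (0:ℤ) ≤ (D:ℤ)^2 * B^2 := by positivity
      have hDB1 : (0:ℤ) ≤ (D:ℤ) * B^2 := by positivity
      rcases hrp.2.2 with h | h <;> rw [h]
      · refine ⟨by nlinarith [nl_flip y (x+2*c*y) 1 g1 (by norm_num)],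
          by nlinarith [sq_nonneg ((x+2*c*y) + y)], by nlinarith, ?_⟩
        have h6 : (y + 2*1*(x+2*c*y))^2 ≤ 3*y^2 + 6*(x+2*c*y)^2 := by
          nlinarith [sq_nonneg (y - (x+2*c*y))]
        nlinarith
      · refine ⟨by nlinarith [nl_flip y (x+2*c*y) (-1) g1 (by norm_num)],
          by nlinarith [sq_nonneg ((x+2*c*y) - y)], by nlinarith, ?_⟩
        have h6 : (y + 2*(-1)*(x+2*c*y))^2 ≤ 3*y^2 + 6*(x+2*c*y)^2 := by
          nlinarith [sq_nonneg (y + (x+2*c*y))]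
        nlinarith

/-- nontriviality mod n of products of reduced words -/
theorem key2 (D n0 : ℕ) (L : List (ℤ × ℤ)) (hne : L ≠ [])
    (hrange : ∀ q ∈ L, 1 ≤ q.1 ∧ q.1 ≤ (D:ℤ) ∧ (q.2 = 1 ∨ q.2 = -1))
    (hred : List.Chain' (fun q r => ¬(q.1 = r.1 ∧ r.2 = -q.2)) L)
    (hb : ((6*(D:ℤ)+5)) ^ L.length < (n0:ℤ)) [NeZero n0] :
    Matrix.SpecialLinearGroup.map (n := Fin 2) (Int.castRingHom (ZMod n0))
      ((L.map wrd).prod) ≠ 1 := by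
  obtain ⟨p, L', rfl⟩ : ∃ p L', L = p :: L' := by
    cases L with
    | nil => exact absurd rfl hne
    | cons p L' => exact ⟨p, L', rfl⟩
  obtain ⟨hlt, _, _, hby⟩ := key D L' p hrange hred
  set g : SL2 ℤ := ((p :: L').map wrd).prod with hg
  set z2 : ℤ := (fcol (sA (-p.1) * g)).2 with hz2
  -- the (1,0) entry of g is z2
  have hent : (g : Matrix (Fin 2) (Fin 2) ℤ) 1 0 = z2 := by
    have hgg : g = sA p.1 * (sA (-p.1) * g) := by
      rw [← mul_assoc, ← sA_add]; simp
    conv_lhs => rw [hgg]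
    show (fcol (sA p.1 * (sA (-p.1) * g))).2 = z2
    rw [fcol_sA_mul]
  have hz2ne : z2 ≠ 0 := by
    intro h; rw [h] at hlt; nlinarith [sq_nonneg (fcol (sA (-p.1) * g)).1]
  have hz2b : |z2| ≤ (6*(D:ℤ)+5) ^ (L'.length + 1) := by
    have h1 : (0:ℤ) ≤ (6*(D:ℤ)+5) ^ (L'.length + 1) := by positivity
    nlinarith [sq_abs z2, abs_nonneg z2]
  intro hone
  have : ((z2 : ℤ) : ZMod n0) = 0 := by
    have := congrArg (fun m : SL2 (ZMod n0) => (m : Matrix (Fin 2) (Fin 2) (ZMod n0)) 1 0) hone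
    simp only [Matrix.SpecialLinearGroup.coe_one, Matrix.one_apply_ne (by decide : (1 : Fin 2) ≠ 0)] at this
    rw [show ((Matrix.SpecialLinearGroup.map (n := Fin 2) (Int.castRingHom (ZMod n0)) g :
      Matrix (Fin 2) (Fin 2) (ZMod n0)) 1 0) = ((g : Matrix (Fin 2) (Fin 2) ℤ) 1 0 : ZMod n0) by
        simp [Matrix.SpecialLinearGroup.map]; rfl] at this
    rw [hent] at this
    exact this
  rw [ZMod.intCast_zmod_eq_zero_iff_dvd] at this
  have hle := Int.le_of_dvd (abs_pos.mpr hz2ne) ((dvd_abs _ _).mpr this)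
  simp only [List.length_cons] at hb
  linarith

open SimpleGraph in
lemma walk_prod {V : Type*} {G : SimpleGraph V} {Γ : Type*} [Group Γ] (st : V → Γ)
    (gm : V → V → Γ) (hgm : ∀ a b, G.Adj a b → st a * gm a b = st b) :
    ∀ {u v : V} (p : G.Walk u v),
      st u * (p.darts.map (fun d => gm d.toProd.1 d.toProd.2)).prod = st v := by
  intro u v p
  induction p with
  | nil => simp
  | cons h p ih =>
    rw [SimpleGraph.Walk.darts_cons, List.map_cons, List.prod_cons, ← mul_assoc,
      hgm _ _ h]
    exact ih

open SimpleGraph in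
lemma chain_ne_of_nodup {V : Type*} {G : SimpleGraph V} :
    ∀ {u v : V} (p : G.Walk u v), p.support.Nodup →
      List.Chain' (fun d d' : G.Dart => d.toProd.1 ≠ d'.toProd.2) p.darts := by
  intro u v p
  induction p with
  | nil => simp [List.Chain']
  | cons h p ih =>
    rename_i a b w
    intro hnd
    rw [SimpleGraph.Walk.support_cons, List.nodup_cons] at hnd
    rw [SimpleGraph.Walk.darts_cons]
    cases p with
    | nil => simp [List.Chain']
    | @cons _ c _ h' q =>
      rw [SimpleGraph.Walk.darts_cons]
      refine List.isChain_cons_cons.mpr ⟨?_, by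
        have := ih hnd.2
        rwa [SimpleGraph.Walk.darts_cons] at this⟩
      intro hc
      have hc' : a = c := hc
      apply hnd.1
      rw [SimpleGraph.Walk.support_cons, hc']
      exact List.mem_cons_of_mem _ q.start_mem_support

open SimpleGraph in
lemma cycle_chain {V : Type*} {G : SimpleGraph V} {u : V} (w : G.Walk u u)
    (hw : w.IsCycle) :
    List.Chain' (fun d d' : G.Dart => d.toProd.1 ≠ d'.toProd.2) w.darts := by
  have h3 := hw.three_le_length
  cases w with
  | nil => simp [List.Chain']
  | cons h p =>
    have hnd : p.support.Nodup := by
      have := hw.support_nodup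
      rwa [SimpleGraph.Walk.support_cons, List.tail_cons] at this
    rw [SimpleGraph.Walk.darts_cons]
    cases p with
    | nil => simp at h3
    | @cons _ c _ h' q =>
      rw [SimpleGraph.Walk.darts_cons]
      refine List.isChain_cons_cons.mpr ⟨?_, by
        have := chain_ne_of_nodup _ hnd
        rwa [SimpleGraph.Walk.darts_cons] at this⟩
      intro hc
      have hc' : u = c := hc
      -- then q is a nodup closed walk, hence nil, length too small
      rw [SimpleGraph.Walk.support_cons, List.nodup_cons] at hnd
      subst hc'
      have hq : q.IsPath := (SimpleGraph.Walk.isPath_def q).mpr hnd.2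
      have : q.length = 0 := by
        have := SimpleGraph.Path.loop_eq (G := G) ⟨q, hq⟩
        have hnil : q = SimpleGraph.Walk.nil := congrArg Subtype.val this
        rw [hnil]; rfl
      simp [SimpleGraph.Walk.length_cons, this] at h3

lemma chain'_and {α : Type*} {R S : α → α → Prop} :
    ∀ {l : List α}, List.Chain' R l → List.Chain' S l →
      List.Chain' (fun a b => R a b ∧ S a b) l := by
  intro l
  induction l with
  | nil => simp [List.Chain']
  | cons a l ih =>
    cases l with
    | nil => simp [List.Chain']
    | cons b l2 =>
      intro hR hS
      simp only [List.Chain'] at *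
      rw [List.isChain_cons_cons] at hR hS ⊢
      exact ⟨⟨hR.1, hS.1⟩, ih hR.2 hS.2⟩


open Finset

/-- sharpness of the semidegree condition: for every `ℓ ≥ 1`, `k ≥ 1` and
every oriented tree `T` with `k` edges such that `Δ⁺(T) = Δ(T) ≥ 2`, there is an oriented
graph `D` whose underlying graph has girth at least `2ℓ+1`, all of whose in- and out-degrees
equal `Δ(T) - 1` (so `δ⁰(D) = Δ(T) - 1`), and which does not contain `T`. -/
theorem stmt_16 {W : Type*} [Fintype W] [DecidableEq W]
    (ℓ k Δ : ℕ) (hℓ : 1 ≤ ℓ) (hk : 1 ≤ k) (hΔ : 2 ≤ Δ)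
    (Tarc : W → W → Prop) [DecidableRel Tarc]
    (hTirr : ∀ w, ¬ Tarc w w) (hTorient : ∀ u v, Tarc u v → ¬ Tarc v u)
    (hTree : (SimpleGraph.fromRel Tarc).IsTree)
    (hTk : Fintype.card W = k + 1)
    (hΔmax : ∀ w : W, (Finset.univ.filter fun u => Tarc w u ∨ Tarc u w).card ≤ Δ)
    (hΔplus : ∃ w : W, (Finset.univ.filter fun u => Tarc w u).card = Δ) :
    ∃ (n : ℕ) (A : Fin n → Fin n → Bool),
      (∀ v, ¬ A v v) ∧
      (∀ u v, A u v → ¬ A v u) ∧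
      (2 * ℓ : ℕ∞) < (SimpleGraph.fromRel fun u v => A u v = true).egirth ∧
      (∀ v, (Finset.univ.filter fun u => A v u).card = Δ - 1 ∧
        (Finset.univ.filter fun u => A u v).card = Δ - 1) ∧
      ¬ ∃ f : W → Fin n, Function.Injective f ∧ ∀ u v, Tarc u v → A (f u) (f v) := by
  
  classical
  set D : ℕ := Δ - 1 with hD
  have hD1 : 1 ≤ D := by omega
  set n0 : ℕ := (6*D+5)^(2*ℓ) + 1 with hn0
  haveI : NeZero n0 := ⟨by positivity⟩
  let Γ := SL2 (ZMod n0)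
  let ρ : SL2 ℤ →* Γ := Matrix.SpecialLinearGroup.map (Int.castRingHom (ZMod n0))
  let gg : ℕ → Γ := fun a => ρ (wrd ((a:ℤ)+1, 1))
  have hbound : ∀ m : ℕ, m ≤ 2*ℓ → (6*(D:ℤ)+5)^m < (n0:ℤ) := by
    intro m h2
    have h : (6*D+5)^m < n0 := Nat.lt_succ_of_le (Nat.pow_le_pow_right (by omega) h2)
    exact_mod_cast h
  have hrng : ∀ a : ℕ, a < D → ∀ e : ℤ, e = 1 ∨ e = -1 →
      (1 ≤ ((a:ℤ)+1) ∧ ((a:ℤ)+1) ≤ (D:ℤ) ∧ (e = 1 ∨ e = -1)) := by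
    intro a ha e he
    refine ⟨by omega, by exact_mod_cast ha, he⟩
  have hne1 : ∀ a : ℕ, a < D → gg a ≠ 1 := by
    intro a ha h1
    apply key2 D n0 [((a:ℤ)+1, 1)] (by simp)
      (by intro q hq; simp only [List.mem_singleton] at hq; subst hq
          exact hrng a ha 1 (Or.inl rfl))
      (by simp [List.Chain']) (by simpa using hbound 1 (by omega))
    simpa using h1
  have hmul : ∀ a b : ℕ, a < D → b < D → gg a * gg b ≠ 1 := by
    intro a b ha hb h1
    apply key2 D n0 [((a:ℤ)+1, 1), ((b:ℤ)+1, 1)] (by simp)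
      (by intro q hq; simp only [List.mem_cons, List.mem_singleton, List.not_mem_nil,
            or_false] at hq
          rcases hq with rfl | rfl
          exacts [hrng a ha 1 (Or.inl rfl), hrng b hb 1 (Or.inl rfl)])
      (by simp [List.Chain']) (by simpa using hbound 2 (by omega))
    simp only [List.map_cons, List.map_nil, List.prod_cons, List.prod_nil, mul_one, map_mul]
    exact h1
  have hinj : ∀ a b : ℕ, a < D → b < D → gg a = gg b → a = b := by
    intro a b ha hb hEq
    by_contra hne
    apply key2 D n0 [((a:ℤ)+1, 1), ((b:ℤ)+1, -1)] (by simp)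
      (by intro q hq; simp only [List.mem_cons, List.mem_singleton, List.not_mem_nil,
            or_false] at hq
          rcases hq with rfl | rfl
          exacts [hrng a ha 1 (Or.inl rfl), hrng b hb (-1) (Or.inr rfl)])
      (by refine List.isChain_cons_cons.mpr ⟨?_, by simp⟩
          rintro ⟨h1, -⟩
          have h1' : (a:ℤ)+1 = (b:ℤ)+1 := h1
          exact hne (by omega))
      (by simpa using hbound 2 (by omega))
    simp only [List.map_cons, List.map_nil, List.prod_cons, List.prod_nil, mul_one, map_mul]
    rw [show ((b:ℤ)+1, (-1:ℤ)) = (((b:ℤ)+1, (1:ℤ)).1, -((b:ℤ)+1, (1:ℤ)).2) from rfl, wrd_inv]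
    rw [map_inv]
    show gg a * (gg b)⁻¹ = 1
    rw [hEq, mul_inv_cancel]
  let n : ℕ := Fintype.card Γ
  let eΓ : Γ ≃ Fin n := Fintype.equivFin Γ
  let es : Fin n → Γ := eΓ.symm
  let Arc : Γ → Γ → Prop := fun x y => ∃ a ∈ Finset.range D, y = x * gg a
  let A : Fin n → Fin n → Bool := fun u v => decide (Arc (es u) (es v))
  have hAiff : ∀ u v, A u v = true ↔ Arc (es u) (es v) := by
    intro u v; exact decide_eq_true_iff
  have hdegout : ∀ v : Fin n, (Finset.univ.filter fun u => A v u).card = Δ - 1 := by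
    intro v
    have himg : (Finset.univ.filter fun u => A v u) =
        (Finset.range D).image (fun a => eΓ (es v * gg a)) := by
      ext u
      simp only [Finset.mem_filter, Finset.mem_univ, true_and, Finset.mem_image]
      rw [show (A v u = true) ↔ _ from hAiff v u]
      constructor
      · rintro ⟨a, ha, hEq⟩
        exact ⟨a, ha, by rw [← hEq]; simp [es]⟩
      · rintro ⟨a, ha, rfl⟩
        exact ⟨a, ha, by simp [es]⟩
    rw [himg, Finset.card_image_of_injOn, Finset.card_range]
    intro a ha b hb hEq
    exact hinj a b (Finset.mem_range.mp ha) (Finset.mem_range.mp hb)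
      (mul_left_cancel (eΓ.injective hEq))
  refine ⟨n, A, ?_, ?_, ?_, ?_, ?_⟩
  · -- irreflexive
    intro v hv
    obtain ⟨a, ha, hEq⟩ := (hAiff v v).mp hv
    exact hne1 a (Finset.mem_range.mp ha) (left_eq_mul.mp hEq)
  · -- antisymmetric
    intro u v huv hvu
    obtain ⟨a, ha, hEq1⟩ := (hAiff u v).mp huv
    obtain ⟨b, hb, hEq2⟩ := (hAiff v u).mp hvu
    refine hmul a b (Finset.mem_range.mp ha) (Finset.mem_range.mp hb) ?_
    have : es u = es u * (gg a * gg b) := by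
      conv_lhs => rw [hEq2, hEq1]
      rw [mul_assoc]
    exact (left_eq_mul.mp this)
  · -- girth
    set G' : SimpleGraph (Fin n) := SimpleGraph.fromRel (fun u v => A u v = true) with hG'
    have hge : ((2*ℓ+1 : ℕ) : ℕ∞) ≤ G'.egirth := by
      rw [SimpleGraph.le_egirth]
      intro a w hw
      by_contra hlt
      rw [not_le] at hlt
      have hlen : w.length ≤ 2*ℓ := by
        have : (w.length : ℕ∞) < ((2*ℓ+1 : ℕ) : ℕ∞) := hlt
        exact_mod_cast Nat.lt_succ_iff.mp (by exact_mod_cast this)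
      have h3 := hw.three_le_length
      -- labelling of arcs
      let lab : Γ → Γ → ℤ × ℤ := fun x y =>
        if h : Arc x y then ((h.choose : ℤ)+1, 1)
        else if h' : Arc y x then ((h'.choose : ℤ)+1, -1) else (1,1)
      have hlab : ∀ x y : Γ, (Arc x y ∨ Arc y x) →
          ((1 ≤ (lab x y).1 ∧ (lab x y).1 ≤ (D:ℤ) ∧ ((lab x y).2 = 1 ∨ (lab x y).2 = -1)) ∧
            x * ρ (wrd (lab x y)) = y) := by
        intro x y hxy
        by_cases h : Arc x y
        · simp only [lab, dif_pos h]
          obtain ⟨ha, hEq⟩ := h.choose_spec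
          have haD : h.choose < D := Finset.mem_range.mp ha
          refine ⟨⟨by omega, by exact_mod_cast haD, by simp⟩, hEq.symm⟩
        · have h' : Arc y x := hxy.resolve_left h
          simp only [lab, dif_neg h, dif_pos h']
          obtain ⟨ha, hEq⟩ := h'.choose_spec
          have haD : h'.choose < D := Finset.mem_range.mp ha
          refine ⟨⟨by omega, by exact_mod_cast haD, by simp⟩, ?_⟩
          have hw1 : wrd ((h'.choose : ℤ)+1, -1) = (wrd ((h'.choose : ℤ)+1, 1))⁻¹ :=
            wrd_inv _ 1
          rw [hw1, map_inv]
          exact mul_inv_eq_iff_eq_mul.mpr hEq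
      have hcanc : ∀ x y z : Γ, (Arc x y ∨ Arc y x) → (Arc y z ∨ Arc z y) →
          (lab x y).1 = (lab y z).1 → (lab y z).2 = -((lab x y).2) → x = z := by
        intro x y z hxy hyz h1 h2
        have e1 := (hlab x y hxy).2
        have e2 := (hlab y z hyz).2
        have hwz : wrd (lab y z) = (wrd (lab x y))⁻¹ := by
          have hp : lab y z = ((lab x y).1, -((lab x y).2)) := Prod.ext h1.symm h2
          rw [hp, wrd_inv]
        calc x = (x * ρ (wrd (lab x y))) * (ρ (wrd (lab x y)))⁻¹ := by
              rw [mul_assoc, mul_inv_cancel, mul_one]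
          _ = y * (ρ (wrd (lab x y)))⁻¹ := by rw [e1]
          _ = y * ρ (wrd (lab y z)) := by rw [hwz, map_inv]
          _ = z := e2
      have hadj : ∀ {u v : Fin n}, G'.Adj u v → (Arc (es u) (es v) ∨ Arc (es v) (es u)) := by
        intro u v h
        rw [hG', SimpleGraph.fromRel_adj] at h
        rcases h.2 with h' | h'
        · exact Or.inl ((hAiff u v).mp h')
        · exact Or.inr ((hAiff v u).mp h')
      have hprod := walk_prod (G := G') es (fun u v => ρ (wrd (lab (es u) (es v))))
        (fun a b hab => (hlab _ _ (hadj hab)).2) w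
      have hP1 : ((w.darts.map (fun d => ρ (wrd (lab (es d.toProd.1) (es d.toProd.2))))).prod)
          = 1 := mul_eq_left.mp hprod
      have hρ1 : Matrix.SpecialLinearGroup.map (n := Fin 2) (Int.castRingHom (ZMod n0))
          (((w.darts.map (fun d => lab (es d.toProd.1) (es d.toProd.2))).map wrd).prod) = 1 := by
        rw [List.map_map, ← hP1]
        rw [show Matrix.SpecialLinearGroup.map (n := Fin 2) (Int.castRingHom (ZMod n0)) = ρ
          from rfl]
        rw [MonoidHom.map_list_prod, List.map_map]
        rfl
      apply key2 D n0 (w.darts.map (fun d => lab (es d.toProd.1) (es d.toProd.2)))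
      · -- nonempty
        intro hnil
        have := congrArg List.length hnil
        simp only [List.length_map, SimpleGraph.Walk.length_darts, List.length_nil] at this
        omega
      · -- range
        intro q hq
        obtain ⟨d, hd, rfl⟩ := List.mem_map.mp hq
        exact (hlab _ _ (hadj d.adj)).1
      · -- reduced
        rw [List.Chain', List.isChain_map]
        have hch := chain'_and (cycle_chain w hw) (SimpleGraph.Walk.isChain_dartAdj_darts w)
        refine hch.imp ?_
        rintro d d' ⟨hne, hDA⟩ ⟨h1, h2⟩
        have hmid : es d.toProd.2 = es d'.toProd.1 := congrArg es hDA
        have hxy := hadj d.adj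
        have hyz := hadj d'.adj
        rw [← hmid] at hyz h1 h2
        exact hne (eΓ.symm.injective (hcanc _ _ _ hxy hyz h1 h2))
      · -- bound
        rw [List.length_map, SimpleGraph.Walk.length_darts]
        exact hbound w.length hlen
      · exact hρ1
    refine lt_of_lt_of_le ?_ hge
    rw [show (2 * ℓ : ℕ∞) = ((2*ℓ : ℕ) : ℕ∞) by push_cast; ring]
    exact_mod_cast Nat.lt_succ_self (2*ℓ)
  · -- degrees
    intro v
    refine ⟨hdegout v, ?_⟩
    have himg : (Finset.univ.filter fun u => A u v) =
        (Finset.range D).image (fun a => eΓ (es v * (gg a)⁻¹)) := by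
      ext u
      simp only [Finset.mem_filter, Finset.mem_univ, true_and, Finset.mem_image]
      rw [show (A u v = true) ↔ _ from hAiff u v]
      constructor
      · rintro ⟨a, ha, hEq⟩
        refine ⟨a, ha, ?_⟩
        rw [hEq, mul_assoc, mul_inv_cancel, mul_one]
        simp [es]
      · rintro ⟨a, ha, rfl⟩
        refine ⟨a, ha, ?_⟩
        simp only [es, Equiv.symm_apply_apply]
        rw [mul_assoc, inv_mul_cancel, mul_one]
    rw [himg, Finset.card_image_of_injOn, Finset.card_range]
    intro a ha b hb hEq
    exact hinj a b (Finset.mem_range.mp ha) (Finset.mem_range.mp hb)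
      (inv_injective (mul_left_cancel (eΓ.injective hEq)))
  · -- does not contain T
    rintro ⟨f, hfinj, hfarc⟩
    obtain ⟨w0, hw0⟩ := hΔplus
    have hsub : (Finset.univ.filter fun u => Tarc w0 u).image f ⊆
        Finset.univ.filter fun u => A (f w0) u := by
      intro x hx
      simp only [Finset.mem_image, Finset.mem_filter, Finset.mem_univ, true_and] at hx ⊢
      obtain ⟨u, hu, rfl⟩ := hx
      exact hfarc _ _ hu
    have hcard1 : ((Finset.univ.filter fun u => Tarc w0 u).image f).card = Δ := by
      rw [Finset.card_image_of_injective _ hfinj, hw0]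
    have hcard2 : (Finset.univ.filter fun u => A (f w0) u).card = Δ - 1 := hdegout (f w0)
    have := Finset.card_le_card hsub
    omega
end
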